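/- arXiv:0906.0690 — 6 statements merged into one kernel-verified Lean document; each statement's English description precedes it below -/
import Mathlib

section
/- Let X ~ P and Y ~ Q be independent random variables on ℕ, with X Poisson bounded with ratio λ and Y Poisson bounded with ratio μ. Then X + Y (with distribution the convolution P*Q) is Poisson bounded with ratio λ + μ, and for every α ∈ (0,1) the thinned distribution T_α(P) is Poisson bounded with ratio αλ. -/
open scoped BigOperators ENNReal
open Filter Topology

noncomputable section

/-- A probability mass function on ℕ: nonnegative values summing to 1. -/
def IsPMF (P : ℕ → ℝ) : Prop := (∀ x, 0 ≤ P x) ∧ HasSum P 1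

/-- The α-thinning of a distribution `P` on ℕ. -/
def thin (α : ℝ) (P : ℕ → ℝ) (z : ℕ) : ℝ :=
  ∑' x : ℕ, P x * (x.choose z : ℝ) * α ^ z * (1 - α) ^ (x - z)

/-- Convolution of two distributions on ℕ. -/
def conv (P Q : ℕ → ℝ) (n : ℕ) : ℝ :=
  ∑ k ∈ Finset.range (n + 1), P k * Q (n - k)

/-- The k-th factorial moment of a distribution `P` on ℕ, valued in `[0,∞]`. -/
def fmE (P : ℕ → ℝ) (k : ℕ) : ℝ≥0∞ :=
  ∑' x : ℕ, ENNReal.ofReal (P x) * (x.descFactorial k : ℝ≥0∞)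

/-- Poisson boundedness with ratio λ: `E[X^(k↓)] ≤ λ^k` for all `k ≥ 0`. -/
def IsPB (P : ℕ → ℝ) (lam : ℝ) : Prop :=
  ∀ k : ℕ, fmE P k ≤ ENNReal.ofReal lam ^ k

-- auxiliary lemmas

lemma descFactorial_add (a b k : ℕ) :
    (a + b).descFactorial k =
      ∑ i ∈ Finset.range (k + 1), k.choose i * (a.descFactorial i * b.descFactorial (k - i)) := by
  rw [Nat.descFactorial_eq_factorial_mul_choose, Nat.add_choose_eq,
    Finset.Nat.sum_antidiagonal_eq_sum_range_succ_mk, Finset.mul_sum]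
  refine Finset.sum_congr rfl fun i hi => ?_
  rw [Finset.mem_range, Nat.lt_succ_iff] at hi
  rw [Nat.descFactorial_eq_factorial_mul_choose, Nat.descFactorial_eq_factorial_mul_choose,
    show k.choose i * (i.factorial * a.choose i * ((k - i).factorial * b.choose (k - i)))
      = (k.choose i * i.factorial * (k - i).factorial) * (a.choose i * b.choose (k - i)) by ring,
    Nat.choose_mul_factorial_mul_factorial hi]

lemma desc_mul_choose (x z k : ℕ) (hkz : k ≤ z) :
    z.descFactorial k * x.choose z = x.descFactorial k * (x - k).choose (z - k) := by
  rcases le_or_gt z x with h | h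
  · rw [Nat.descFactorial_eq_factorial_mul_choose z, Nat.descFactorial_eq_factorial_mul_choose x,
      Nat.mul_assoc, Nat.mul_assoc, mul_comm (z.choose k), Nat.choose_mul hkz]
  · rw [Nat.choose_eq_zero_of_lt h, Nat.mul_zero]
    rcases le_or_gt k x with hk | hk
    · rw [Nat.choose_eq_zero_of_lt (by omega), Nat.mul_zero]
    · rw [Nat.descFactorial_eq_zero_iff_lt.2 hk, Nat.zero_mul]

lemma binom_sum_one (α : ℝ) (x : ℕ) :
    ∑ z ∈ Finset.range (x + 1), (x.choose z : ℝ) * α ^ z * (1 - α) ^ (x - z) = 1 := by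
  have h := add_pow α (1 - α) x
  rw [add_sub_cancel, one_pow] at h
  calc ∑ z ∈ Finset.range (x + 1), (x.choose z : ℝ) * α ^ z * (1 - α) ^ (x - z)
      = ∑ z ∈ Finset.range (x + 1), α ^ z * (1 - α) ^ (x - z) * (x.choose z : ℝ) :=
        Finset.sum_congr rfl fun z _ => by ring
    _ = 1 := h.symm

lemma binom_fm (α : ℝ) (x k : ℕ) :
    ∑ z ∈ Finset.range (x + 1),
      (x.choose z : ℝ) * α ^ z * (1 - α) ^ (x - z) * (z.descFactorial k : ℝ)
      = α ^ k * (x.descFactorial k : ℝ) := by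
  rcases le_or_gt k x with hkx | hkx
  · rw [Finset.range_eq_Ico,
      ← Finset.sum_Ico_consecutive _ (Nat.zero_le k) (by omega : k ≤ x + 1)]
    have h1 : (∑ z ∈ Finset.Ico 0 k,
        (x.choose z : ℝ) * α ^ z * (1 - α) ^ (x - z) * (z.descFactorial k : ℝ)) = 0 := by
      refine Finset.sum_eq_zero fun z hz => ?_
      rw [Finset.mem_Ico] at hz
      rw [Nat.descFactorial_eq_zero_iff_lt.2 hz.2]
      simp
    rw [h1, zero_add, Finset.sum_Ico_eq_sum_range]
    have hx1 : x + 1 - k = (x - k) + 1 := by omega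
    rw [hx1]
    have key : ∀ j ∈ Finset.range ((x - k) + 1),
        (x.choose (k + j) : ℝ) * α ^ (k + j) * (1 - α) ^ (x - (k + j))
          * ((k + j).descFactorial k : ℝ)
        = (α ^ k * (x.descFactorial k : ℝ)) *
            (((x - k).choose j : ℝ) * α ^ j * (1 - α) ^ ((x - k) - j)) := by
      intro j hj
      have hd : ((k + j).descFactorial k : ℝ) * (x.choose (k + j) : ℝ)
          = (x.descFactorial k : ℝ) * ((x - k).choose ((k + j) - k) : ℝ) := by
        exact_mod_cast congrArg (Nat.cast : ℕ → ℝ)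
          (desc_mul_choose x (k + j) k (Nat.le_add_right k j))
      have hkj : (k + j) - k = j := by omega
      rw [hkj] at hd
      have hxz : x - (k + j) = (x - k) - j := by omega
      rw [hxz, pow_add]
      calc (x.choose (k + j) : ℝ) * (α ^ k * α ^ j) * (1 - α) ^ ((x - k) - j)
            * ((k + j).descFactorial k : ℝ)
          = (((k + j).descFactorial k : ℝ) * (x.choose (k + j) : ℝ))
            * (α ^ k * α ^ j * (1 - α) ^ ((x - k) - j)) := by ring
        _ = ((x.descFactorial k : ℝ) * ((x - k).choose j : ℝ))
            * (α ^ k * α ^ j * (1 - α) ^ ((x - k) - j)) := by rw [hd]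
        _ = (α ^ k * (x.descFactorial k : ℝ)) *
            (((x - k).choose j : ℝ) * α ^ j * (1 - α) ^ ((x - k) - j)) := by ring
    rw [Finset.sum_congr rfl key, ← Finset.mul_sum, binom_sum_one, mul_one]
  · have h0 : ∀ z ∈ Finset.range (x + 1),
        (x.choose z : ℝ) * α ^ z * (1 - α) ^ (x - z) * (z.descFactorial k : ℝ) = 0 := by
      intro z hz
      rw [Finset.mem_range] at hz
      rw [Nat.descFactorial_eq_zero_iff_lt.2 (by omega)]
      simp
    rw [Finset.sum_congr rfl h0, Finset.sum_const, smul_zero,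
      Nat.descFactorial_eq_zero_iff_lt.2 hkx]
    simp

lemma fmE_conv (P Q : ℕ → ℝ) (hP0 : ∀ x, 0 ≤ P x) (hQ0 : ∀ x, 0 ≤ Q x) (k : ℕ) :
    fmE (conv P Q) k
      = ∑ i ∈ Finset.range (k + 1),
          (k.choose i : ℝ≥0∞) * (fmE P i * fmE Q (k - i)) := by
  set oP : ℕ → ℝ≥0∞ := fun a => ENNReal.ofReal (P a) with hoP
  set oQ : ℕ → ℝ≥0∞ := fun a => ENNReal.ofReal (Q a) with hoQ
  set g : ℕ × ℕ → ℝ≥0∞ :=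
    fun p => oP p.1 * oQ p.2 * ((p.1 + p.2).descFactorial k : ℝ≥0∞) with hg
  have stepA : fmE (conv P Q) k = ∑' n : ℕ, ∑ p ∈ Finset.HasAntidiagonal.antidiagonal n, g p := by
    refine tsum_congr fun n => ?_
    rw [Finset.Nat.sum_antidiagonal_eq_sum_range_succ_mk]
    rw [show ENNReal.ofReal (conv P Q n)
        = ∑ j ∈ Finset.range (n + 1), oP j * oQ (n - j) by
      rw [conv, ENNReal.ofReal_sum_of_nonneg
        (fun j _ => mul_nonneg (hP0 j) (hQ0 (n - j)))]
      exact Finset.sum_congr rfl fun j _ => ENNReal.ofReal_mul (hP0 j)]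
    rw [Finset.sum_mul]
    refine Finset.sum_congr rfl fun j hj => ?_
    rw [Finset.mem_range, Nat.lt_succ_iff] at hj
    simp only [hg]
    rw [Nat.add_sub_cancel' hj]
  have stepB : (∑' n : ℕ, ∑ p ∈ Finset.HasAntidiagonal.antidiagonal n, g p) = ∑' p : ℕ × ℕ, g p := by
    rw [← Finset.HasAntidiagonal.sigmaAntidiagonalEquivProd.tsum_eq g, ENNReal.tsum_sigma']
    exact tsum_congr fun n => (Finset.tsum_subtype (Finset.HasAntidiagonal.antidiagonal n) g).symm
  rw [stepA, stepB, ENNReal.tsum_prod']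
  have cast_desc : ∀ a b : ℕ, ((a + b).descFactorial k : ℝ≥0∞)
      = ∑ i ∈ Finset.range (k + 1),
          (k.choose i : ℝ≥0∞) * ((a.descFactorial i : ℝ≥0∞) * (b.descFactorial (k - i) : ℝ≥0∞)) := by
    intro a b
    rw [descFactorial_add a b k]
    push_cast
    rfl
  calc (∑' a : ℕ, ∑' b : ℕ, g (a, b))
      = ∑' a : ℕ, ∑' b : ℕ, ∑ i ∈ Finset.range (k + 1),
          ((k.choose i : ℝ≥0∞) * (oP a * (a.descFactorial i : ℝ≥0∞)))
            * (oQ b * (b.descFactorial (k - i) : ℝ≥0∞)) := by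
        refine tsum_congr fun a => tsum_congr fun b => ?_
        simp only [hg]
        rw [cast_desc a b, Finset.mul_sum]
        exact Finset.sum_congr rfl fun i _ => by ring
    _ = ∑' a : ℕ, ∑ i ∈ Finset.range (k + 1),
          ((k.choose i : ℝ≥0∞) * (oP a * (a.descFactorial i : ℝ≥0∞))) * fmE Q (k - i) := by
        refine tsum_congr fun a => ?_
        rw [Summable.tsum_finsetSum (fun i _ => ENNReal.summable)]
        exact Finset.sum_congr rfl fun i _ => ENNReal.tsum_mul_left
    _ = ∑ i ∈ Finset.range (k + 1), (k.choose i : ℝ≥0∞) * (fmE P i * fmE Q (k - i)) := by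
        rw [Summable.tsum_finsetSum (fun i _ => ENNReal.summable)]
        refine Finset.sum_congr rfl fun i _ => ?_
        calc (∑' a : ℕ, ((k.choose i : ℝ≥0∞) * (oP a * (a.descFactorial i : ℝ≥0∞)))
                * fmE Q (k - i))
            = ∑' a : ℕ, (oP a * (a.descFactorial i : ℝ≥0∞))
                * ((k.choose i : ℝ≥0∞) * fmE Q (k - i)) := tsum_congr fun a => by ring
          _ = fmE P i * ((k.choose i : ℝ≥0∞) * fmE Q (k - i)) := ENNReal.tsum_mul_right
          _ = (k.choose i : ℝ≥0∞) * (fmE P i * fmE Q (k - i)) := by ring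

lemma fmE_thin (P : ℕ → ℝ) (hP : IsPMF P) (α : ℝ) (hα : α ∈ Set.Ioo (0:ℝ) 1) (k : ℕ) :
    fmE (thin α P) k = ENNReal.ofReal α ^ k * fmE P k := by
  obtain ⟨hα0, hα1⟩ := hα
  have hβ : (0 : ℝ) ≤ 1 - α := by linarith
  have hb : ∀ x z : ℕ, 0 ≤ (x.choose z : ℝ) * α ^ z * (1 - α) ^ (x - z) := fun x z => by
    positivity
  have hble1 : ∀ x z : ℕ, (x.choose z : ℝ) * α ^ z * (1 - α) ^ (x - z) ≤ 1 := by
    intro x z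
    rcases le_or_gt z x with h | h
    · calc (x.choose z : ℝ) * α ^ z * (1 - α) ^ (x - z)
          ≤ ∑ i ∈ Finset.range (x + 1), (x.choose i : ℝ) * α ^ i * (1 - α) ^ (x - i) :=
            Finset.single_le_sum (f := fun i => (x.choose i : ℝ) * α ^ i * (1 - α) ^ (x - i))
              (fun i _ => hb x i) (Finset.mem_range.2 (Nat.lt_succ_of_le h))
        _ = 1 := binom_sum_one α x
    · rw [Nat.choose_eq_zero_of_lt h]
      norm_num
  have hsumm : ∀ z : ℕ, Summable (fun x : ℕ =>
      P x * (x.choose z : ℝ) * α ^ z * (1 - α) ^ (x - z)) := by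
    intro z
    refine Summable.of_nonneg_of_le
      (fun x => by have := hP.1 x; have := hb x z; nlinarith [hb x z, hP.1 x])
      (fun x => ?_) hP.2.summable
    calc P x * (x.choose z : ℝ) * α ^ z * (1 - α) ^ (x - z)
        = P x * ((x.choose z : ℝ) * α ^ z * (1 - α) ^ (x - z)) := by ring
      _ ≤ P x * 1 := mul_le_mul_of_nonneg_left (hble1 x z) (hP.1 x)
      _ = P x := mul_one _
  set w : ℕ → ℕ → ℝ≥0∞ :=
    fun x z => ENNReal.ofReal ((x.choose z : ℝ) * α ^ z * (1 - α) ^ (x - z)) with hw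
  have hofReal : ∀ z : ℕ, ENNReal.ofReal (thin α P z)
      = ∑' x : ℕ, ENNReal.ofReal (P x) * w x z := by
    intro z
    rw [thin, ENNReal.ofReal_tsum_of_nonneg
      (fun x => by nlinarith [hb x z, hP.1 x]) (hsumm z)]
    refine tsum_congr fun x => ?_
    rw [show P x * (x.choose z : ℝ) * α ^ z * (1 - α) ^ (x - z)
        = P x * ((x.choose z : ℝ) * α ^ z * (1 - α) ^ (x - z)) by ring,
      ENNReal.ofReal_mul (hP.1 x)]
  have inner : ∀ x : ℕ, (∑' z : ℕ, w x z * (z.descFactorial k : ℝ≥0∞))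
      = ENNReal.ofReal α ^ k * (x.descFactorial k : ℝ≥0∞) := by
    intro x
    have hsupp : ∀ z : ℕ, z ∉ Finset.range (x + 1) →
        w x z * (z.descFactorial k : ℝ≥0∞) = 0 := by
      intro z hz
      rw [Finset.mem_range] at hz
      simp only [hw]
      rw [Nat.choose_eq_zero_of_lt (by omega)]
      simp
    rw [tsum_eq_sum hsupp]
    have : ∀ z ∈ Finset.range (x + 1), w x z * (z.descFactorial k : ℝ≥0∞)
        = ENNReal.ofReal ((x.choose z : ℝ) * α ^ z * (1 - α) ^ (x - z)
            * (z.descFactorial k : ℝ)) := by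
      intro z _
      rw [ENNReal.ofReal_mul (hb x z), ENNReal.ofReal_natCast]
    rw [Finset.sum_congr rfl this, ← ENNReal.ofReal_sum_of_nonneg
      (fun z _ => mul_nonneg (hb x z) (Nat.cast_nonneg _)), binom_fm α x k,
      ENNReal.ofReal_mul (by positivity), ENNReal.ofReal_pow hα0.le,
      ENNReal.ofReal_natCast]
  calc fmE (thin α P) k
      = ∑' z : ℕ, (∑' x : ℕ, ENNReal.ofReal (P x) * w x z) * (z.descFactorial k : ℝ≥0∞) := by
        exact tsum_congr fun z => by rw [hofReal z]
    _ = ∑' z : ℕ, ∑' x : ℕ, (ENNReal.ofReal (P x) * w x z) * (z.descFactorial k : ℝ≥0∞) :=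
        tsum_congr fun z => ENNReal.tsum_mul_right.symm
    _ = ∑' x : ℕ, ∑' z : ℕ, (ENNReal.ofReal (P x) * w x z) * (z.descFactorial k : ℝ≥0∞) :=
        ENNReal.tsum_comm
    _ = ∑' x : ℕ, ENNReal.ofReal (P x) * ∑' z : ℕ, w x z * (z.descFactorial k : ℝ≥0∞) := by
        refine tsum_congr fun x => ?_
        rw [← ENNReal.tsum_mul_left]
        exact tsum_congr fun z => by ring
    _ = ∑' x : ℕ, ENNReal.ofReal (P x) * (ENNReal.ofReal α ^ k * (x.descFactorial k : ℝ≥0∞)) :=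
        tsum_congr fun x => by rw [inner x]
    _ = ENNReal.ofReal α ^ k * ∑' x : ℕ, ENNReal.ofReal (P x) * (x.descFactorial k : ℝ≥0∞) := by
        rw [← ENNReal.tsum_mul_left]
        exact tsum_congr fun x => by ring
    _ = ENNReal.ofReal α ^ k * fmE P k := rfl

/-- Poisson boundedness is preserved under convolution (independent sums) and thinning. -/
theorem pb_conv_and_thin (P Q : ℕ → ℝ) (hP : IsPMF P) (hQ : IsPMF Q)
    (lam mu : ℝ) (hlam : 0 < lam) (hmu : 0 < mu)
    (hPpb : IsPB P lam) (hQpb : IsPB Q mu) :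
    IsPB (conv P Q) (lam + mu) ∧
      ∀ α ∈ Set.Ioo (0 : ℝ) 1, IsPB (thin α P) (α * lam) := by
  constructor
  · intro k
    rw [fmE_conv P Q hP.1 hQ.1 k, ENNReal.ofReal_add hlam.le hmu.le, add_pow]
    calc ∑ i ∈ Finset.range (k + 1), (k.choose i : ℝ≥0∞) * (fmE P i * fmE Q (k - i))
        ≤ ∑ i ∈ Finset.range (k + 1), (k.choose i : ℝ≥0∞)
            * (ENNReal.ofReal lam ^ i * ENNReal.ofReal mu ^ (k - i)) :=
          Finset.sum_le_sum fun i _ =>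
            mul_le_mul_right (mul_le_mul' (hPpb i) (hQpb (k - i))) _
      _ = ∑ i ∈ Finset.range (k + 1),
            ENNReal.ofReal lam ^ i * ENNReal.ofReal mu ^ (k - i) * (k.choose i : ℝ≥0∞) :=
          Finset.sum_congr rfl fun i _ => by ring
  · intro α hα k
    rw [fmE_thin P hP α hα k, ENNReal.ofReal_mul hα.1.le, mul_pow]
    exact mul_le_mul_right (hPpb k) _
end
end

section
/- (Weak law of thin numbers, non-i.i.d. case) Let P_1, P_2, … be an arbitrary sequence of distributions on ℕ, and let P^{(n)} = P_1 * P_2 * ⋯ * P_n be the convolution of the first n of them. Suppose that as n → ∞: (a) max_{1≤i≤n} [1 − T_{1/n}P_i(0)] → 0; (b) Σ_{i=1}^n [1 − T_{1/n}P_i(0)] → λ; and (c) Σ_{i=1}^n [1 − T_{1/n}P_i(0) − T_{1/n}P_i(1)] → 0, where λ > 0. Then ‖T_{1/n}(P^{(n)}) − Po(λ)‖ → 0 as n → ∞. -/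
open scoped BigOperators
open Filter Topology

noncomputable section

/-- The convolution `P^{(n)} = P_0 * P_1 * ⋯ * P_{n-1}` of the first n
distributions in a sequence. -/
def convMany (P : ℕ → ℕ → ℝ) : ℕ → ℕ → ℝ
  | 0 => fun n => if n = 0 then 1 else 0
  | n + 1 => conv (convMany P n) (P n)

/-- The Poisson distribution with parameter λ. -/
def poissonPMF (lam : ℝ) (x : ℕ) : ℝ := Real.exp (-lam) * lam ^ x / x.factorial

/-- Total variation distance between distributions on ℕ. -/
def tvDist (P Q : ℕ → ℝ) : ℝ := (1 / 2) * ∑' k : ℕ, |P k - Q k|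

section Aux

/-! ### Basic PMF facts -/

lemma IsPMF.summable' {P : ℕ → ℝ} (h : IsPMF P) : Summable P := h.2.summable

lemma IsPMF.tsum' {P : ℕ → ℝ} (h : IsPMF P) : ∑' x, P x = 1 := h.2.tsum_eq

lemma IsPMF.le_one {P : ℕ → ℝ} (h : IsPMF P) (x : ℕ) : P x ≤ 1 := by
  have := Summable.le_tsum h.summable' x (fun y _ => h.1 y)
  rwa [h.tsum'] at this

lemma IsPMF.two_le_one {P : ℕ → ℝ} (h : IsPMF P) : P 0 + P 1 ≤ 1 := by
  have := Summable.sum_le_tsum (Finset.range 2) (fun i _ => h.1 i) h.summable'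
  rw [h.tsum'] at this
  simpa [Finset.sum_range_succ] using this

/-! ### The binomial weight -/

/-- The binomial weight appearing in thinning. -/
def wt (α : ℝ) (z x : ℕ) : ℝ := (x.choose z : ℝ) * α ^ z * (1 - α) ^ (x - z)

lemma thin_eq (α : ℝ) (P : ℕ → ℝ) (z : ℕ) : thin α P z = ∑' x, P x * wt α z x := by
  unfold thin wt
  exact tsum_congr fun x => by ring

lemma wt_nonneg {α : ℝ} (hα : 0 ≤ α) (hα' : α ≤ 1) (z x : ℕ) : 0 ≤ wt α z x := by
  unfold wt
  have h1 : (0:ℝ) ≤ 1 - α := by linarith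
  positivity

lemma wt_zero_of_lt {α : ℝ} {z x : ℕ} (h : x < z) : wt α z x = 0 := by
  unfold wt
  rw [Nat.choose_eq_zero_of_lt h]
  simp

lemma sum_wt (α : ℝ) (x : ℕ) : ∑ z ∈ Finset.range (x + 1), wt α z x = 1 := by
  calc ∑ z ∈ Finset.range (x + 1), wt α z x
      = ∑ m ∈ Finset.range (x + 1), α ^ m * (1 - α) ^ (x - m) * (x.choose m : ℝ) :=
        Finset.sum_congr rfl (fun z _ => by unfold wt; ring)
    _ = (α + (1 - α)) ^ x := (add_pow α (1 - α) x).symm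
    _ = 1 := by norm_num

lemma wt_le_one {α : ℝ} (hα : 0 ≤ α) (hα' : α ≤ 1) (z x : ℕ) : wt α z x ≤ 1 := by
  rcases le_or_gt z x with h | h
  · calc wt α z x ≤ ∑ j ∈ Finset.range (x + 1), wt α j x := by
          apply Finset.single_le_sum (fun j _ => wt_nonneg hα hα' j x)
          simp [Nat.lt_succ_iff, h]
    _ = 1 := sum_wt α x
  · rw [wt_zero_of_lt h]; norm_num

/-! ### Thinning is a PMF -/

lemma summable_thin_term {P : ℕ → ℝ} (hP : IsPMF P) {α : ℝ} (hα : 0 ≤ α) (hα' : α ≤ 1)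
    (z : ℕ) : Summable fun x => P x * wt α z x := by
  apply Summable.of_nonneg_of_le (fun x => mul_nonneg (hP.1 x) (wt_nonneg hα hα' z x))
    (fun x => mul_le_of_le_one_right (hP.1 x) (wt_le_one hα hα' z x)) hP.summable'

lemma thin_nonneg {P : ℕ → ℝ} (hP : IsPMF P) {α : ℝ} (hα : 0 ≤ α) (hα' : α ≤ 1) (z : ℕ) :
    0 ≤ thin α P z := by
  rw [thin_eq]
  exact tsum_nonneg fun x => mul_nonneg (hP.1 x) (wt_nonneg hα hα' z x)

lemma summable_thin_prod {P : ℕ → ℝ} (hP : IsPMF P) {α : ℝ} (hα : 0 ≤ α) (hα' : α ≤ 1) :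
    Summable (fun q : ℕ × ℕ => P q.1 * wt α q.2 q.1) := by
  rw [summable_prod_of_nonneg (fun q => mul_nonneg (hP.1 q.1) (wt_nonneg hα hα' q.2 q.1))]
  constructor
  · intro x
    apply summable_of_ne_finset_zero (s := Finset.range (x + 1))
    intro z hz
    rw [wt_zero_of_lt (by simpa [Nat.lt_succ_iff] using hz), mul_zero]
  · have : (fun x => ∑' z, P x * wt α z x) = P := by
      funext x
      rw [tsum_eq_sum (s := Finset.range (x + 1))
        (fun z hz => by rw [wt_zero_of_lt (by simpa [Nat.lt_succ_iff] using hz), mul_zero]),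
        ← Finset.mul_sum, sum_wt, mul_one]
    rw [this]
    exact hP.summable'

lemma thin_isPMF {P : ℕ → ℝ} (hP : IsPMF P) {α : ℝ} (hα : 0 ≤ α) (hα' : α ≤ 1) :
    IsPMF (thin α P) := by
  refine ⟨thin_nonneg hP hα hα', ?_⟩
  have hF : Summable (fun q : ℕ × ℕ => P q.2 * wt α q.1 q.2) :=
    (summable_thin_prod hP hα hα').prod_symm
  have hfib : ∀ z : ℕ, HasSum (fun x => P x * wt α z x) (thin α P z) := by
    intro z
    rw [thin_eq]
    exact (hF.prod_factor z).hasSum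
  have hmain : HasSum (thin α P) (∑' q : ℕ × ℕ, P q.2 * wt α q.1 q.2) :=
    HasSum.prod_fiberwise hF.hasSum hfib
  have htot : (∑' q : ℕ × ℕ, P q.2 * wt α q.1 q.2) = 1 := by
    have hswap : (∑' q : ℕ × ℕ, P q.2 * wt α q.1 q.2)
        = ∑' q : ℕ × ℕ, P q.1 * wt α q.2 q.1 := by
      rw [← (Equiv.prodComm ℕ ℕ).tsum_eq (fun q : ℕ × ℕ => P q.1 * wt α q.2 q.1)]
      rfl
    rw [hswap, Summable.tsum_prod' (summable_thin_prod hP hα hα')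
      (fun x => ((summable_thin_prod hP hα hα').prod_factor x))]
    have : ∀ x : ℕ, ∑' z, P x * wt α z x = P x := by
      intro x
      rw [tsum_eq_sum (s := Finset.range (x + 1))
        (fun z hz => by rw [wt_zero_of_lt (by simpa [Nat.lt_succ_iff] using hz), mul_zero]),
        ← Finset.mul_sum, sum_wt, mul_one]
    rw [tsum_congr this, hP.tsum']
  rwa [htot] at hmain

/-! ### The diagonal summation engine -/

lemma hasSum_convDiag {G : ℕ → ℕ → ℝ}
    (hsum : Summable (fun p : ℕ × ℕ => G p.1 p.2)) :
    HasSum (fun x => ∑ k ∈ Finset.range (x + 1), G k (x - k)) (∑' p : ℕ × ℕ, G p.1 p.2) := by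
  classical
  set φ : ℕ × ℕ → ℕ × ℕ := fun p => (p.1 + p.2, p.1) with hφdef
  set H : ℕ × ℕ → ℝ := fun q => if q.2 ≤ q.1 then G q.2 (q.1 - q.2) else 0 with hHdef
  have hφ : Function.Injective φ := by
    intro a b h
    simp only [hφdef, Prod.ext_iff] at h
    refine Prod.ext h.2 ?_
    omega
  have hcomp : (H ∘ φ) = fun p : ℕ × ℕ => G p.1 p.2 := by
    funext p
    simp only [Function.comp_apply, hHdef, hφdef]
    rw [if_pos (Nat.le_add_right _ _)]
    congr 1
    omega
  have hmem : ∀ q : ℕ × ℕ, H q ≠ 0 → q ∈ Set.range φ := by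
    intro q hne
    have hle : q.2 ≤ q.1 := by
      by_contra hh
      exact hne (if_neg hh)
    refine ⟨(q.2, q.1 - q.2), ?_⟩
    have h1 : q.2 + (q.1 - q.2) = q.1 := by omega
    simp only [hφdef]
    rw [h1]
  have hrange : ∀ q ∉ Set.range φ, H q = 0 := by
    intro q hq
    by_contra hne
    exact hq (hmem q hne)
  have hHsum : Summable H := by
    rw [← hφ.summable_iff hrange, hcomp]
    exact hsum
  have htsum : ∑' q, H q = ∑' p : ℕ × ℕ, G p.1 p.2 := by
    rw [← hφ.tsum_eq (f := H) (fun q hq => hmem q hq)]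
    exact tsum_congr fun p => congrFun hcomp p
  have hfib : ∀ x : ℕ, HasSum (fun k => H (x, k)) (∑ k ∈ Finset.range (x + 1), G k (x - k)) := by
    intro x
    have h0 : ∀ k ∉ Finset.range (x + 1), H (x, k) = 0 := by
      intro k hk
      simp only [hHdef]
      rw [if_neg (by simp [Nat.lt_succ_iff] at hk; omega)]
    have := hasSum_sum_of_ne_finset_zero (L := SummationFilter.unconditional ℕ) (s := Finset.range (x + 1)) h0
    convert this using 1
    apply Finset.sum_congr rfl
    intro k hk
    simp only [hHdef]
    rw [if_pos (by simp [Nat.lt_succ_iff] at hk; omega)]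
  have := HasSum.prod_fiberwise hHsum.hasSum hfib
  rwa [htsum] at this

lemma conv_hasSum {P Q : ℕ → ℝ} (hP0 : ∀ x, 0 ≤ P x) (hQ0 : ∀ x, 0 ≤ Q x)
    (hPs : Summable P) (hQs : Summable Q) :
    HasSum (conv P Q) ((∑' x, P x) * (∑' x, Q x)) := by
  have hsum : Summable (fun p : ℕ × ℕ => P p.1 * Q p.2) :=
    hPs.mul_of_nonneg hQs hP0 hQ0
  have h := hasSum_convDiag (G := fun a b => P a * Q b) hsum
  have hPn : Summable fun x => ‖P x‖ := by
    refine hPs.congr fun x => ?_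
    rw [Real.norm_eq_abs, abs_of_nonneg (hP0 x)]
  have hQn : Summable fun x => ‖Q x‖ := by
    refine hQs.congr fun x => ?_
    rw [Real.norm_eq_abs, abs_of_nonneg (hQ0 x)]
  rw [tsum_mul_tsum_of_summable_norm hPn hQn]
  exact h

lemma conv_isPMF {P Q : ℕ → ℝ} (hP : IsPMF P) (hQ : IsPMF Q) : IsPMF (conv P Q) := by
  constructor
  · intro n
    exact Finset.sum_nonneg fun k _ => mul_nonneg (hP.1 k) (hQ.1 _)
  · have := conv_hasSum hP.1 hQ.1 hP.summable' hQ.summable'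
    rwa [hP.tsum', hQ.tsum', one_mul] at this

/-! ### Vandermonde identity for the weights -/

lemma wt_add (α : ℝ) (a b z : ℕ) :
    wt α z (a + b) = ∑ j ∈ Finset.range (z + 1), wt α j a * wt α (z - j) b := by
  by_cases hz : z ≤ a + b
  · have hcast : ((a + b).choose z : ℝ)
        = ∑ j ∈ Finset.range (z + 1), (a.choose j : ℝ) * (b.choose (z - j) : ℝ) := by
      have := Nat.add_choose_eq a b z
      rw [Finset.Nat.sum_antidiagonal_eq_sum_range_succ_mk] at this
      exact_mod_cast congrArg (Nat.cast : ℕ → ℝ) this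
    have hterm : ∀ j ∈ Finset.range (z + 1),
        wt α j a * wt α (z - j) b
          = ((a.choose j : ℝ) * (b.choose (z - j) : ℝ)) * (α ^ z * (1 - α) ^ (a + b - z)) := by
      intro j hj
      simp only [Finset.mem_range, Nat.lt_succ_iff] at hj
      by_cases hja : j ≤ a
      · by_cases hjb : z - j ≤ b
        · unfold wt
          have e1 : α ^ j * α ^ (z - j) = α ^ z := by
            rw [← pow_add]; congr 1; omega
          have e2 : (1 - α) ^ (a - j) * (1 - α) ^ (b - (z - j)) = (1 - α) ^ (a + b - z) := by
            rw [← pow_add]; congr 1; omega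
          calc (a.choose j : ℝ) * α ^ j * (1 - α) ^ (a - j)
                * ((b.choose (z - j) : ℝ) * α ^ (z - j) * (1 - α) ^ (b - (z - j)))
              = ((a.choose j : ℝ) * (b.choose (z - j) : ℝ))
                * ((α ^ j * α ^ (z - j)) * ((1 - α) ^ (a - j) * (1 - α) ^ (b - (z - j)))) := by
                ring
            _ = _ := by rw [e1, e2]
        · rw [Nat.choose_eq_zero_of_lt (by omega : b < z - j)]
          unfold wt
          rw [Nat.choose_eq_zero_of_lt (by omega : b < z - j)]
          push_cast
          ring
      · rw [Nat.choose_eq_zero_of_lt (by omega : a < j)]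
        unfold wt
        rw [Nat.choose_eq_zero_of_lt (by omega : a < j)]
        push_cast
        ring
    rw [Finset.sum_congr rfl hterm, ← Finset.sum_mul, ← hcast]
    unfold wt
    ring
  · rw [wt_zero_of_lt (by omega)]
    symm
    apply Finset.sum_eq_zero
    intro j hj
    simp only [Finset.mem_range, Nat.lt_succ_iff] at hj
    by_cases hja : j ≤ a
    · have : b < z - j := by omega
      rw [show wt α (z - j) b = 0 from by unfold wt; rw [Nat.choose_eq_zero_of_lt this]; ring]
      ring
    · rw [show wt α j a = 0 from by
        unfold wt; rw [Nat.choose_eq_zero_of_lt (by omega)]; ring]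
      ring

/-! ### Thinning factorizes over convolution -/

lemma thin_conv {α : ℝ} (hα : 0 ≤ α) (hα' : α ≤ 1) {P Q : ℕ → ℝ}
    (hP : IsPMF P) (hQ : IsPMF Q) :
    thin α (conv P Q) = conv (thin α P) (thin α Q) := by
  funext z
  set G : ℕ → ℕ → ℝ := fun a b => P a * Q b * wt α z (a + b) with hGdef
  have hGsum : Summable (fun p : ℕ × ℕ => G p.1 p.2) := by
    apply Summable.of_nonneg_of_le
      (fun p => mul_nonneg (mul_nonneg (hP.1 _) (hQ.1 _)) (wt_nonneg hα hα' _ _))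
      (fun p => mul_le_of_le_one_right (mul_nonneg (hP.1 _) (hQ.1 _)) (wt_le_one hα hα' _ _))
    exact hP.summable'.mul_of_nonneg hQ.summable' hP.1 hQ.1
  have step1 : thin α (conv P Q) z = ∑' p : ℕ × ℕ, G p.1 p.2 := by
    rw [thin_eq]
    have : (fun x => conv P Q x * wt α z x)
        = fun x => ∑ k ∈ Finset.range (x + 1), G k (x - k) := by
      funext x
      rw [conv, Finset.sum_mul]
      apply Finset.sum_congr rfl
      intro k hk
      simp only [Finset.mem_range, Nat.lt_succ_iff] at hk
      simp only [hGdef]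
      rw [show k + (x - k) = x by omega]
    rw [this, (hasSum_convDiag hGsum).tsum_eq]
  have step2 : ∀ p : ℕ × ℕ, G p.1 p.2
      = ∑ j ∈ Finset.range (z + 1), (P p.1 * wt α j p.1) * (Q p.2 * wt α (z - j) p.2) := by
    intro p
    simp only [hGdef]
    rw [wt_add α p.1 p.2 z, Finset.mul_sum]
    apply Finset.sum_congr rfl
    intro j _
    ring
  have hsummand : ∀ j ∈ Finset.range (z + 1),
      Summable (fun p : ℕ × ℕ => (P p.1 * wt α j p.1) * (Q p.2 * wt α (z - j) p.2)) := by
    intro j _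
    exact (summable_thin_term hP hα hα' j).mul_of_nonneg
      (summable_thin_term hQ hα hα' (z - j))
      (fun x => mul_nonneg (hP.1 x) (wt_nonneg hα hα' _ _))
      (fun x => mul_nonneg (hQ.1 x) (wt_nonneg hα hα' _ _))
  have step3 : (∑' p : ℕ × ℕ, G p.1 p.2)
      = ∑ j ∈ Finset.range (z + 1),
          ∑' p : ℕ × ℕ, (P p.1 * wt α j p.1) * (Q p.2 * wt α (z - j) p.2) := by
    rw [tsum_congr step2]
    exact Summable.tsum_finsetSum hsummand
  have step4 : ∀ j ∈ Finset.range (z + 1),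
      (∑' p : ℕ × ℕ, (P p.1 * wt α j p.1) * (Q p.2 * wt α (z - j) p.2))
        = thin α P j * thin α Q (z - j) := by
    intro j _
    have hPn : Summable fun x => ‖P x * wt α j x‖ := by
      refine (summable_thin_term hP hα hα' j).congr fun x => ?_
      rw [Real.norm_eq_abs, abs_of_nonneg (mul_nonneg (hP.1 x) (wt_nonneg hα hα' _ _))]
    have hQn : Summable fun x => ‖Q x * wt α (z - j) x‖ := by
      refine (summable_thin_term hQ hα hα' (z - j)).congr fun x => ?_
      rw [Real.norm_eq_abs, abs_of_nonneg (mul_nonneg (hQ.1 x) (wt_nonneg hα hα' _ _))]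
    rw [← tsum_mul_tsum_of_summable_norm hPn hQn, thin_eq, thin_eq]
  rw [step1, step3, Finset.sum_congr rfl step4]
  rfl

/-! ### Dirac at 0 and convMany -/

lemma delta0_isPMF : IsPMF (fun n : ℕ => if n = 0 then (1:ℝ) else 0) := by
  constructor
  · intro n; by_cases h : n = 0 <;> simp [h]
  · exact hasSum_ite_eq 0 1

lemma thin_delta0 (α : ℝ) :
    thin α (fun n : ℕ => if n = 0 then (1:ℝ) else 0)
      = fun n : ℕ => if n = 0 then (1:ℝ) else 0 := by
  funext z
  unfold thin
  rw [tsum_eq_single 0 (fun x hx => by simp [hx])]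
  rcases z with _ | z
  · simp
  · simp [Nat.choose_eq_zero_of_lt (Nat.succ_pos z)]

lemma convMany_isPMF {A : ℕ → ℕ → ℝ} (h : ∀ i, IsPMF (A i)) (n : ℕ) :
    IsPMF (convMany A n) := by
  induction n with
  | zero => exact delta0_isPMF
  | succ n ih => exact conv_isPMF ih (h n)

lemma thin_convMany {α : ℝ} (hα : 0 ≤ α) (hα' : α ≤ 1) {A : ℕ → ℕ → ℝ}
    (h : ∀ i, IsPMF (A i)) (n : ℕ) :
    thin α (convMany A n) = convMany (fun i => thin α (A i)) n := by
  induction n with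
  | zero => exact thin_delta0 α
  | succ n ih =>
    show thin α (conv (convMany A n) (A n)) = conv _ _
    rw [thin_conv hα hα' (convMany_isPMF h n) (h n), ih]

/-! ### Total variation basics -/

lemma summable_abs_sub {P Q : ℕ → ℝ} (hP : IsPMF P) (hQ : IsPMF Q) :
    Summable fun k => |P k - Q k| := by
  apply Summable.of_nonneg_of_le (fun k => abs_nonneg _)
    (fun k => ?_) (hP.summable'.add hQ.summable')
  calc |P k - Q k| ≤ |P k| + |Q k| := abs_sub _ _
    _ = P k + Q k := by rw [abs_of_nonneg (hP.1 k), abs_of_nonneg (hQ.1 k)]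

lemma tv_nonneg (P Q : ℕ → ℝ) : 0 ≤ tvDist P Q :=
  mul_nonneg (by norm_num) (tsum_nonneg fun k => abs_nonneg _)

lemma tv_comm (P Q : ℕ → ℝ) : tvDist P Q = tvDist Q P := by
  unfold tvDist
  congr 1
  exact tsum_congr fun k => abs_sub_comm _ _

lemma tv_triangle {P Q R : ℕ → ℝ} (hP : IsPMF P) (hQ : IsPMF Q) (hR : IsPMF R) :
    tvDist P R ≤ tvDist P Q + tvDist Q R := by
  unfold tvDist
  rw [← mul_add]
  apply mul_le_mul_of_nonneg_left _ (by norm_num : (0:ℝ) ≤ 1/2)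
  rw [← Summable.tsum_add (summable_abs_sub hP hQ) (summable_abs_sub hQ hR)]
  apply Summable.tsum_le_tsum _ (summable_abs_sub hP hR)
    ((summable_abs_sub hP hQ).add (summable_abs_sub hQ hR))
  intro k
  calc |P k - R k| = |(P k - Q k) + (Q k - R k)| := by ring_nf
    _ ≤ |P k - Q k| + |Q k - R k| := abs_add_le _ _

lemma conv_comm (P Q : ℕ → ℝ) : conv P Q = conv Q P := by
  funext n
  unfold conv
  rw [← Finset.sum_range_reflect]
  apply Finset.sum_congr rfl
  intro j hj
  simp only [Finset.mem_range, Nat.lt_succ_iff] at hj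
  rw [show n + 1 - 1 - j = n - j by omega, show n - (n - j) = j by omega]
  ring

lemma tv_conv_right {P Q R : ℕ → ℝ} (hP : IsPMF P) (hQ : IsPMF Q) (hR : IsPMF R) :
    tvDist (conv P R) (conv Q R) ≤ tvDist P Q := by
  set D : ℕ → ℝ := fun k => |P k - Q k| with hDdef
  have hD : Summable D := summable_abs_sub hP hQ
  have hD0 : ∀ k, 0 ≤ D k := fun k => abs_nonneg _
  have key : ∀ n, |conv P R n - conv Q R n| ≤ conv D R n := by
    intro n
    unfold conv
    rw [← Finset.sum_sub_distrib]
    calc |∑ k ∈ Finset.range (n + 1), (P k * R (n - k) - Q k * R (n - k))|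
        ≤ ∑ k ∈ Finset.range (n + 1), |P k * R (n - k) - Q k * R (n - k)| :=
          Finset.abs_sum_le_sum_abs _ _
      _ = ∑ k ∈ Finset.range (n + 1), D k * R (n - k) := by
          apply Finset.sum_congr rfl
          intro k _
          rw [← sub_mul, abs_mul, abs_of_nonneg (hR.1 _)]
  have hconv : HasSum (conv D R) ((∑' k, D k) * 1) := by
    have := conv_hasSum hD0 hR.1 hD hR.summable'
    rwa [hR.tsum'] at this
  unfold tvDist
  apply mul_le_mul_of_nonneg_left _ (by norm_num : (0:ℝ) ≤ 1/2)
  calc (∑' n, |conv P R n - conv Q R n|) ≤ ∑' n, conv D R n := by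
        apply Summable.tsum_le_tsum key _ hconv.summable
        exact Summable.of_nonneg_of_le (fun n => abs_nonneg _) key hconv.summable
    _ = (∑' k, D k) * 1 := hconv.tsum_eq
    _ = ∑' k, D k := mul_one _

lemma tv_conv_both {P₁ P₂ Q₁ Q₂ : ℕ → ℝ} (hP₁ : IsPMF P₁) (hP₂ : IsPMF P₂)
    (hQ₁ : IsPMF Q₁) (hQ₂ : IsPMF Q₂) :
    tvDist (conv P₁ P₂) (conv Q₁ Q₂) ≤ tvDist P₁ Q₁ + tvDist P₂ Q₂ := by
  have h1 : tvDist (conv P₁ P₂) (conv Q₁ P₂) ≤ tvDist P₁ Q₁ := tv_conv_right hP₁ hQ₁ hP₂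
  have h2 : tvDist (conv Q₁ P₂) (conv Q₁ Q₂) ≤ tvDist P₂ Q₂ := by
    rw [conv_comm Q₁ P₂, conv_comm Q₁ Q₂]
    exact tv_conv_right hP₂ hQ₂ hQ₁
  calc tvDist (conv P₁ P₂) (conv Q₁ Q₂)
      ≤ tvDist (conv P₁ P₂) (conv Q₁ P₂) + tvDist (conv Q₁ P₂) (conv Q₁ Q₂) :=
        tv_triangle (conv_isPMF hP₁ hP₂) (conv_isPMF hQ₁ hP₂) (conv_isPMF hQ₁ hQ₂)
    _ ≤ tvDist P₁ Q₁ + tvDist P₂ Q₂ := add_le_add h1 h2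

lemma tv_self (P : ℕ → ℝ) : tvDist P P = 0 := by
  unfold tvDist
  simp

lemma tv_convMany {A B : ℕ → ℕ → ℝ} (hA : ∀ i, IsPMF (A i)) (hB : ∀ i, IsPMF (B i)) (n : ℕ) :
    tvDist (convMany A n) (convMany B n) ≤ ∑ i ∈ Finset.range n, tvDist (A i) (B i) := by
  induction n with
  | zero => simp [convMany, tv_self]
  | succ n ih =>
    rw [Finset.sum_range_succ]
    calc tvDist (convMany A (n+1)) (convMany B (n+1))
        ≤ tvDist (convMany A n) (convMany B n) + tvDist (A n) (B n) :=
          tv_conv_both (convMany_isPMF hA n) (hA n) (convMany_isPMF hB n) (hB n)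
      _ ≤ _ := add_le_add_left ih _

/-! ### Poisson facts -/

lemma poisson_nonneg {lam : ℝ} (h : 0 ≤ lam) (x : ℕ) : 0 ≤ poissonPMF lam x := by
  unfold poissonPMF
  positivity

lemma poisson_hasSum {lam : ℝ} : HasSum (poissonPMF lam) 1 := by
  have h1 : HasSum (fun n : ℕ => lam ^ n / n.factorial) (Real.exp lam) := by
    rw [Real.exp_eq_exp_ℝ]
    exact NormedSpace.expSeries_div_hasSum_exp lam
  have h2 := h1.mul_left (Real.exp (-lam))
  have h3 : Real.exp (-lam) * Real.exp lam = 1 := by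
    rw [← Real.exp_add]; norm_num
  rw [h3] at h2
  apply h2.congr_fun
  intro n
  unfold poissonPMF
  rw [mul_div_assoc]

lemma poisson_isPMF {lam : ℝ} (h : 0 ≤ lam) : IsPMF (poissonPMF lam) :=
  ⟨poisson_nonneg h, poisson_hasSum⟩

lemma poisson_zero : poissonPMF 0 = fun n : ℕ => if n = 0 then (1:ℝ) else 0 := by
  funext n
  unfold poissonPMF
  rcases n with _ | n
  · norm_num
  · rw [zero_pow (Nat.succ_ne_zero n)]
    norm_num

lemma conv_poisson (a b : ℝ) :
    conv (poissonPMF a) (poissonPMF b) = poissonPMF (a + b) := by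
  funext n
  unfold conv poissonPMF
  rw [show -(a+b) = -a + -b by ring, Real.exp_add, add_pow]
  rw [mul_div_assoc, Finset.sum_div, Finset.mul_sum]
  apply Finset.sum_congr rfl
  intro k hk
  simp only [Finset.mem_range, Nat.lt_succ_iff] at hk
  rw [Nat.cast_choose ℝ hk]
  have h1 : (k.factorial : ℝ) ≠ 0 := Nat.cast_ne_zero.2 k.factorial_ne_zero
  have h2 : ((n - k).factorial : ℝ) ≠ 0 := Nat.cast_ne_zero.2 (n - k).factorial_ne_zero
  have h3 : (n.factorial : ℝ) ≠ 0 := Nat.cast_ne_zero.2 n.factorial_ne_zero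
  field_simp

lemma convMany_poisson (q : ℕ → ℝ) (n : ℕ) :
    convMany (fun i => poissonPMF (q i)) n = poissonPMF (∑ i ∈ Finset.range n, q i) := by
  induction n with
  | zero => simp [convMany, poisson_zero]
  | succ n ih =>
    show conv (convMany _ n) _ = _
    rw [ih, conv_poisson, Finset.sum_range_succ]

lemma conv_delta0 (P : ℕ → ℝ) :
    conv P (fun n : ℕ => if n = 0 then (1:ℝ) else 0) = P := by
  funext n
  unfold conv
  rw [Finset.sum_eq_single n]
  · simp
  · intro k hk hkn
    simp only [Finset.mem_range, Nat.lt_succ_iff] at hk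
    have h' : n - k ≠ 0 := by omega
    simp [h']
  · intro h
    exact absurd (Finset.self_mem_range_succ n) h

lemma tsum_split2 {f : ℕ → ℝ} (hf : Summable f) :
    ∑' k, f k = f 0 + f 1 + ∑' k, f (k + 2) := by
  have h1 := Summable.tsum_eq_zero_add hf
  have h2 := Summable.tsum_eq_zero_add ((summable_nat_add_iff 1).2 hf)
  have h3 : (∑' b, f (b + 1 + 1)) = ∑' k, f (k + 2) :=
    tsum_congr fun b => by norm_num
  rw [h1, h2, h3]
  ring

lemma tv_delta0_poisson {c : ℝ} (hc : 0 ≤ c) :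
    tvDist (fun n : ℕ => if n = 0 then (1:ℝ) else 0) (poissonPMF c) ≤ c := by
  set D : ℕ → ℝ := fun k => |(if k = 0 then (1:ℝ) else 0) - poissonPMF c k| with hDdef
  have hD : Summable D := summable_abs_sub delta0_isPMF (poisson_isPMF hc)
  have hexp : Real.exp (-c) ≤ 1 := Real.exp_le_one_iff.2 (by linarith)
  have hp0 : poissonPMF c 0 = Real.exp (-c) := by
    simp [poissonPMF]
  have hD0 : D 0 = 1 - Real.exp (-c) := by
    show |(if (0:ℕ) = 0 then (1:ℝ) else 0) - poissonPMF c 0| = _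
    rw [if_pos rfl, hp0, abs_of_nonneg (by linarith)]
  have hDk : ∀ k, D (k + 1) = poissonPMF c (k + 1) := by
    intro k
    show |(if k + 1 = 0 then (1:ℝ) else 0) - poissonPMF c (k + 1)| = _
    rw [if_neg (Nat.succ_ne_zero k), zero_sub, abs_neg,
      abs_of_nonneg (poisson_nonneg hc _)]
  have htail : ∑' k, poissonPMF c (k + 1) = 1 - Real.exp (-c) := by
    have h := Summable.tsum_eq_zero_add (poisson_isPMF hc).summable'
    rw [(poisson_isPMF hc).tsum'] at h
    rw [hp0] at h
    linarith
  have hsum : ∑' k, D k = 2 * (1 - Real.exp (-c)) := by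
    rw [Summable.tsum_eq_zero_add hD, hD0, tsum_congr hDk, htail]
    ring
  unfold tvDist
  rw [hsum]
  have : 1 - c ≤ Real.exp (-c) := by
    have := Real.add_one_le_exp (-c)
    linarith
  linarith

lemma tv_poisson_le {a b : ℝ} (ha : 0 ≤ a) (hab : a ≤ b) :
    tvDist (poissonPMF a) (poissonPMF b) ≤ b - a := by
  have key := tv_conv_right (P := fun n : ℕ => if n = 0 then (1:ℝ) else 0)
    (Q := poissonPMF (b - a)) (R := poissonPMF a)
    delta0_isPMF (poisson_isPMF (by linarith)) (poisson_isPMF ha)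
  have e1 : conv (fun n : ℕ => if n = 0 then (1:ℝ) else 0) (poissonPMF a) = poissonPMF a := by
    rw [conv_comm, conv_delta0]
  have e2 : conv (poissonPMF (b - a)) (poissonPMF a) = poissonPMF b := by
    rw [conv_poisson, show b - a + a = b by ring]
  rw [e1, e2] at key
  exact le_trans key (tv_delta0_poisson (by linarith))

lemma tv_poisson_abs {a b : ℝ} (ha : 0 ≤ a) (hb : 0 ≤ b) :
    tvDist (poissonPMF a) (poissonPMF b) ≤ |a - b| := by
  rcases le_total a b with h | h
  · calc tvDist (poissonPMF a) (poissonPMF b) ≤ b - a := tv_poisson_le ha h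
      _ = |a - b| := by rw [abs_sub_comm, abs_of_nonneg (by linarith)]
  · rw [tv_comm]
    calc tvDist (poissonPMF b) (poissonPMF a) ≤ a - b := tv_poisson_le hb h
      _ = |a - b| := (abs_of_nonneg (by linarith)).symm

/-! ### Bernoulli -/

/-- Bernoulli distribution on ℕ. -/
def ber (p : ℝ) (k : ℕ) : ℝ := if k = 0 then 1 - p else if k = 1 then p else 0

lemma ber_isPMF {p : ℝ} (h0 : 0 ≤ p) (h1 : p ≤ 1) : IsPMF (ber p) := by
  constructor
  · intro k
    unfold ber
    split
    · linarith
    · split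
      · exact h0
      · exact le_rfl
  · have h : ∀ k ∉ Finset.range 2, ber p k = 0 := by
      intro k hk
      simp only [Finset.mem_range] at hk
      unfold ber
      rw [if_neg (by omega), if_neg (by omega)]
    have hs := hasSum_sum_of_ne_finset_zero (L := SummationFilter.unconditional ℕ) h
    have hv : ∑ k ∈ Finset.range 2, ber p k = 1 := by
      rw [Finset.sum_range_succ, Finset.sum_range_one]
      show (1 - p) + p = 1
      ring
    rwa [hv] at hs

lemma tv_to_ber {T : ℕ → ℝ} (hT : IsPMF T) :
    tvDist T (ber (1 - T 0)) ≤ 1 - T 0 - T 1 := by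
  set p := 1 - T 0 with hpdef
  have hp0 : 0 ≤ p := by rw [hpdef]; linarith [hT.le_one 0]
  have hp1 : p ≤ 1 := by rw [hpdef]; linarith [hT.1 0]
  have hTB : Summable fun k => |T k - ber p k| := summable_abs_sub hT (ber_isPMF hp0 hp1)
  have hD0 : |T 0 - ber p 0| = 0 := by
    show |T 0 - (1 - p)| = 0
    rw [show T 0 - (1 - p) = 0 from by rw [hpdef]; ring]
    exact abs_zero
  have hD1 : |T 1 - ber p 1| = 1 - T 0 - T 1 := by
    show |T 1 - p| = _
    rw [abs_of_nonpos (by rw [hpdef]; linarith [hT.two_le_one]), hpdef]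
    ring
  have hDk : ∀ k, |T (k + 2) - ber p (k + 2)| = T (k + 2) := by
    intro k
    unfold ber
    rw [if_neg (by omega), if_neg (by omega), sub_zero, abs_of_nonneg (hT.1 _)]
  have htail : ∑' k, T (k + 2) = 1 - T 0 - T 1 := by
    have := tsum_split2 hT.summable'
    rw [hT.tsum'] at this
    linarith
  have hsum : ∑' k, |T k - ber p k| = 2 * (1 - T 0 - T 1) := by
    rw [tsum_split2 hTB, hD0, hD1, tsum_congr hDk, htail]
    ring
  unfold tvDist
  rw [hsum]
  have hp := hpdef
  linarith [hT.two_le_one]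

lemma tv_ber_poisson {p : ℝ} (h0 : 0 ≤ p) (h1 : p ≤ 1) :
    tvDist (ber p) (poissonPMF p) ≤ p ^ 2 := by
  have hBP : Summable fun k => |ber p k - poissonPMF p k| :=
    summable_abs_sub (ber_isPMF h0 h1) (poisson_isPMF h0)
  have hexp1 : 1 - p ≤ Real.exp (-p) := by
    have := Real.add_one_le_exp (-p)
    linarith
  have hexp2 : Real.exp (-p) ≤ 1 := Real.exp_le_one_iff.2 (by linarith)
  have hP0 : poissonPMF p 0 = Real.exp (-p) := by
    simp [poissonPMF]
  have hP1 : poissonPMF p 1 = p * Real.exp (-p) := by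
    unfold poissonPMF
    rw [pow_one]
    simp [Nat.factorial, mul_comm]
  have hD0 : |ber p 0 - poissonPMF p 0| = Real.exp (-p) - (1 - p) := by
    rw [hP0, show ber p 0 = 1 - p from rfl, abs_of_nonpos (by linarith)]
    ring
  have hD1 : |ber p 1 - poissonPMF p 1| = p - p * Real.exp (-p) := by
    rw [hP1, show ber p 1 = p from rfl, abs_of_nonneg (by nlinarith)]
  have hDk : ∀ k, |ber p (k + 2) - poissonPMF p (k + 2)| = poissonPMF p (k + 2) := by
    intro k
    rw [show ber p (k + 2) = 0 from by unfold ber; rw [if_neg (by omega), if_neg (by omega)]]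
    rw [zero_sub, abs_neg, abs_of_nonneg (poisson_nonneg h0 _)]
  have htail : ∑' k, poissonPMF p (k + 2) = 1 - Real.exp (-p) - p * Real.exp (-p) := by
    have := tsum_split2 (poisson_isPMF h0).summable'
    rw [(poisson_isPMF h0).tsum', hP0, hP1] at this
    linarith
  have hsum : ∑' k, |ber p k - poissonPMF p k| = 2 * (p - p * Real.exp (-p)) := by
    rw [tsum_split2 hBP, hD0, hD1, tsum_congr hDk, htail]
    ring
  unfold tvDist
  rw [hsum]
  have : p * (1 - Real.exp (-p)) ≤ p * p := by
    apply mul_le_mul_of_nonneg_left _ h0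
    linarith
  nlinarith

/-! ### The main bound for a fixed n -/

lemma main_bound {α : ℝ} (hα : 0 ≤ α) (hα' : α ≤ 1) (P : ℕ → ℕ → ℝ)
    (hP : ∀ i, IsPMF (P i)) (n : ℕ) (lam : ℝ) (hlam : 0 ≤ lam) :
    tvDist (thin α (convMany P n)) (poissonPMF lam)
      ≤ (∑ i ∈ Finset.range n, (1 - thin α (P i) 0 - thin α (P i) 1))
        + (∑ i ∈ Finset.range n, (1 - thin α (P i) 0) ^ 2)
        + |(∑ i ∈ Finset.range n, (1 - thin α (P i) 0)) - lam| := by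
  set T : ℕ → ℕ → ℝ := fun i => thin α (P i) with hTdef
  set q : ℕ → ℝ := fun i => 1 - T i 0 with hqdef
  have hTpmf : ∀ i, IsPMF (T i) := fun i => thin_isPMF (hP i) hα hα'
  have hq0 : ∀ i, 0 ≤ q i := by
    intro i
    have := (hTpmf i).le_one 0
    simp only [hqdef]
    linarith
  have hq1 : ∀ i, q i ≤ 1 := by
    intro i
    have := (hTpmf i).1 0
    simp only [hqdef]
    linarith
  have hBpmf : ∀ i, IsPMF (ber (q i)) := fun i => ber_isPMF (hq0 i) (hq1 i)
  have hCpmf : ∀ i, IsPMF (poissonPMF (q i)) := fun i => poisson_isPMF (hq0 i)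
  have hsq : 0 ≤ ∑ i ∈ Finset.range n, q i :=
    Finset.sum_nonneg fun i _ => hq0 i
  have step0 : thin α (convMany P n) = convMany T n := thin_convMany hα hα' hP n
  have h1 : tvDist (convMany T n) (convMany (fun i => ber (q i)) n)
      ≤ ∑ i ∈ Finset.range n, (1 - T i 0 - T i 1) := by
    calc tvDist (convMany T n) (convMany (fun i => ber (q i)) n)
        ≤ ∑ i ∈ Finset.range n, tvDist (T i) (ber (q i)) := tv_convMany hTpmf hBpmf n
      _ ≤ ∑ i ∈ Finset.range n, (1 - T i 0 - T i 1) :=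
          Finset.sum_le_sum fun i _ => tv_to_ber (hTpmf i)
  have h2 : tvDist (convMany (fun i => ber (q i)) n) (convMany (fun i => poissonPMF (q i)) n)
      ≤ ∑ i ∈ Finset.range n, (q i) ^ 2 := by
    calc tvDist (convMany (fun i => ber (q i)) n) (convMany (fun i => poissonPMF (q i)) n)
        ≤ ∑ i ∈ Finset.range n, tvDist (ber (q i)) (poissonPMF (q i)) :=
          tv_convMany hBpmf hCpmf n
      _ ≤ ∑ i ∈ Finset.range n, (q i) ^ 2 :=
          Finset.sum_le_sum fun i _ => tv_ber_poisson (hq0 i) (hq1 i)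
  have h3 : tvDist (convMany (fun i => poissonPMF (q i)) n) (poissonPMF lam)
      ≤ |(∑ i ∈ Finset.range n, q i) - lam| := by
    rw [convMany_poisson]
    exact tv_poisson_abs hsq hlam
  have htri : tvDist (convMany T n) (poissonPMF lam)
      ≤ tvDist (convMany T n) (convMany (fun i => ber (q i)) n)
        + tvDist (convMany (fun i => ber (q i)) n) (convMany (fun i => poissonPMF (q i)) n)
        + tvDist (convMany (fun i => poissonPMF (q i)) n) (poissonPMF lam) := by
    calc tvDist (convMany T n) (poissonPMF lam)
        ≤ tvDist (convMany T n) (convMany (fun i => ber (q i)) n)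
          + tvDist (convMany (fun i => ber (q i)) n) (poissonPMF lam) :=
          tv_triangle (convMany_isPMF hTpmf n) (convMany_isPMF hBpmf n) (poisson_isPMF hlam)
      _ ≤ _ := by
          have := tv_triangle (convMany_isPMF hBpmf n) (convMany_isPMF hCpmf n)
            (poisson_isPMF hlam)
          linarith
  rw [step0]
  calc tvDist (convMany T n) (poissonPMF lam)
      ≤ _ := htri
    _ ≤ (∑ i ∈ Finset.range n, (1 - T i 0 - T i 1))
        + (∑ i ∈ Finset.range n, (q i) ^ 2)
        + |(∑ i ∈ Finset.range n, q i) - lam| := by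
        exact add_le_add (add_le_add h1 h2) h3

end Aux

/-- Weak law of thin numbers, non-i.i.d. case. Conditions:
(a) `max_{i<n} [1 − T_{1/n}P_i(0)] → 0`;
(b) `Σ_{i<n} [1 − T_{1/n}P_i(0)] → λ`;
(c) `Σ_{i<n} [1 − T_{1/n}P_i(0) − T_{1/n}P_i(1)] → 0`.
Then `‖T_{1/n}(P^{(n)}) − Po(λ)‖ → 0`. -/
theorem weak_law_of_thin_numbers_noniid (P : ℕ → ℕ → ℝ) (hP : ∀ i, IsPMF (P i))
    (lam : ℝ) (hlam : 0 < lam)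
    (ha : ∀ ε > (0 : ℝ), ∀ᶠ n : ℕ in atTop,
      ∀ i < n, 1 - thin (1 / (n : ℝ)) (P i) 0 < ε)
    (hb : Tendsto (fun n : ℕ =>
        ∑ i ∈ Finset.range n, (1 - thin (1 / (n : ℝ)) (P i) 0)) atTop (nhds lam))
    (hc : Tendsto (fun n : ℕ =>
        ∑ i ∈ Finset.range n,
          (1 - thin (1 / (n : ℝ)) (P i) 0 - thin (1 / (n : ℝ)) (P i) 1)) atTop (nhds 0)) :
    Tendsto (fun n : ℕ => tvDist (thin (1 / (n : ℝ)) (convMany P n)) (poissonPMF lam))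
      atTop (nhds 0) := by
  rw [Metric.tendsto_nhds]
  intro ε hε
  have hlam1 : (0:ℝ) < lam + 1 := by linarith
  set ε' : ℝ := ε / (3 * (lam + 1)) with hε'def
  have hε' : 0 < ε' := by positivity
  have H1 := ha ε' hε'
  have H2 : ∀ᶠ n : ℕ in atTop,
      |(∑ i ∈ Finset.range n, (1 - thin (1 / (n : ℝ)) (P i) 0)) - lam| < min (ε/3) 1 := by
    have := Metric.tendsto_nhds.1 hb (min (ε/3) 1) (by positivity)
    filter_upwards [this] with n hn
    rwa [Real.dist_eq] at hn
  have H3 : ∀ᶠ n : ℕ in atTop,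
      |∑ i ∈ Finset.range n,
        (1 - thin (1 / (n : ℝ)) (P i) 0 - thin (1 / (n : ℝ)) (P i) 1)| < ε / 3 := by
    have := Metric.tendsto_nhds.1 hc (ε/3) (by positivity)
    filter_upwards [this] with n hn
    rwa [Real.dist_eq, sub_zero] at hn
  filter_upwards [H1, H2, H3] with n hn1 hn2 hn3
  set α : ℝ := 1 / (n : ℝ) with hαdef
  have hα : 0 ≤ α := by positivity
  have hα' : α ≤ 1 := by
    rcases Nat.eq_zero_or_pos n with h | h
    · simp [hαdef, h]
    · rw [hαdef]
      rw [div_le_one (by exact_mod_cast h)]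
      exact_mod_cast h
  have hbound := main_bound hα hα' P hP n lam hlam.le
  rw [Real.dist_eq, sub_zero, abs_of_nonneg (tv_nonneg _ _)]
  set T : ℕ → ℕ → ℝ := fun i => thin α (P i) with hTdef
  have hq0 : ∀ i, 0 ≤ 1 - T i 0 := by
    intro i
    have := (thin_isPMF (hP i) hα hα').le_one 0
    simp only [hTdef]
    linarith
  have hA : (∑ i ∈ Finset.range n, (1 - T i 0 - T i 1)) < ε / 3 :=
    lt_of_le_of_lt (le_abs_self _) hn3
  have hBsum : (∑ i ∈ Finset.range n, (1 - T i 0)) ≤ lam + 1 := by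
    have := lt_of_lt_of_le hn2 (min_le_right _ _)
    have := abs_lt.1 this
    linarith [this.2]
  have hB : (∑ i ∈ Finset.range n, (1 - T i 0) ^ 2) ≤ ε / 3 := by
    have hstep : ∀ i ∈ Finset.range n, (1 - T i 0) ^ 2 ≤ ε' * (1 - T i 0) := by
      intro i hi
      have hi' : i < n := Finset.mem_range.1 hi
      have := hn1 i hi'
      have h0 := hq0 i
      nlinarith
    calc (∑ i ∈ Finset.range n, (1 - T i 0) ^ 2)
        ≤ ∑ i ∈ Finset.range n, ε' * (1 - T i 0) := Finset.sum_le_sum hstep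
      _ = ε' * ∑ i ∈ Finset.range n, (1 - T i 0) := by rw [Finset.mul_sum]
      _ ≤ ε' * (lam + 1) := mul_le_mul_of_nonneg_left hBsum hε'.le
      _ = ε / 3 := by
          rw [hε'def]
          field_simp
  have hC : |(∑ i ∈ Finset.range n, (1 - T i 0)) - lam| < ε / 3 :=
    lt_of_lt_of_le hn2 (min_le_left _ _)
  calc tvDist (thin α (convMany P n)) (poissonPMF lam)
      ≤ _ := hbound
    _ < ε := by
        have := hA
        have := hB
        have := hC
        linarith

end
end

section
/- Let P be a distribution on ℕ with mean λ/α and finite variance σ², for some λ > 0 and α ∈ (0,1). Then D(T_α(P) ‖ Po(λ)) ≤ α²·(1/(2(1−α)) + σ²/λ). -/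
open scoped BigOperators
open Filter Topology

noncomputable section

/-- Information divergence (natural logarithm, with `0·log 0 = 0`). -/
def klDiv (P Q : ℕ → ℝ) : ℝ := ∑' z : ℕ, P z * Real.log (P z / Q z)

namespace ThinAux

open Finset

/-- binomial pmf term -/
def b (α : ℝ) (x z : ℕ) : ℝ := (x.choose z : ℝ) * α ^ z * (1 - α) ^ (x - z)

lemma b_nonneg {α : ℝ} (hα : α ∈ Set.Ioo (0:ℝ) 1) (x z : ℕ) : 0 ≤ b α x z := by
  obtain ⟨h0, h1⟩ := hα
  have h2 : (0:ℝ) ≤ 1 - α := by linarith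
  unfold b
  positivity

lemma b_pos {α : ℝ} (hα : α ∈ Set.Ioo (0:ℝ) 1) {x z : ℕ} (hz : z ≤ x) : 0 < b α x z := by
  obtain ⟨h0, h1⟩ := hα
  have h2 : (0:ℝ) < 1 - α := by linarith
  have h3 : 0 < x.choose z := Nat.choose_pos hz
  have h4 : (0:ℝ) < (x.choose z : ℝ) := by exact_mod_cast h3
  unfold b
  positivity

lemma b_eq_zero {α : ℝ} {x z : ℕ} (hz : x < z) : b α x z = 0 := by
  simp [b, Nat.choose_eq_zero_of_lt hz]

/-- F1: binomial sums to one -/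
lemma sum_b {α : ℝ} (x : ℕ) : ∑ z ∈ range (x+1), b α x z = 1 := by
  have h := add_pow α (1 - α) x
  simp only [add_sub_cancel, one_pow] at h
  rw [show (1:ℝ) = (α + (1-α))^x by rw [show α + (1-α) = 1 by ring, one_pow], add_pow]
  exact Finset.sum_congr rfl fun z hz => by unfold b; ring

lemma hasSum_b {α : ℝ} (x : ℕ) : HasSum (b α x) 1 := by
  rw [← sum_b (α := α) x]
  apply hasSum_sum_of_ne_finset_zero
  intro z hz
  exact b_eq_zero (by simpa using hz)

lemma b_le_one {α : ℝ} (hα : α ∈ Set.Ioo (0:ℝ) 1) (x z : ℕ) : b α x z ≤ 1 := by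
  rcases le_or_gt z x with h | h
  · rw [← sum_b (α := α) x]
    exact Finset.single_le_sum (f := fun z => b α x z)
      (fun i _ => b_nonneg hα x i) (by simp [Nat.lt_succ_iff, h])
  · rw [b_eq_zero h]; norm_num

/-- choose/descFactorial reindexing identity -/
lemma desc_choose (x w k : ℕ) (h : w + k ≤ x) :
    ((w+k).descFactorial k) * x.choose (w+k) = x.descFactorial k * (x-k).choose w := by
  rw [Nat.descFactorial_eq_factorial_mul_choose, Nat.descFactorial_eq_factorial_mul_choose]
  have h1 : k ≤ w + k := Nat.le_add_left _ _
  have h2 := Nat.choose_mul (n := x) (k := w + k) (s := k) h1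
  rw [Nat.add_sub_cancel] at h2
  calc Nat.factorial k * (w+k).choose k * x.choose (w+k)
      = Nat.factorial k * (x.choose (w+k) * (w+k).choose k) := by ring
    _ = Nat.factorial k * (x.choose k * (x-k).choose w) := by rw [h2]
    _ = Nat.factorial k * x.choose k * (x-k).choose w := by ring

/-- F2: factorial moments of the binomial -/
lemma sum_desc_b {α : ℝ} (x k : ℕ) :
    ∑ z ∈ range (x+1), (z.descFactorial k : ℝ) * b α x z
      = (x.descFactorial k : ℝ) * α ^ k := by
  rcases lt_or_ge x k with hxk | hxk
  · rw [Nat.descFactorial_eq_zero_iff_lt.2 hxk]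
    push_cast
    rw [zero_mul]
    apply Finset.sum_eq_zero
    intro z hz
    have hzk : z < k := lt_of_le_of_lt (Nat.lt_succ_iff.mp (Finset.mem_range.mp hz)) hxk
    rw [Nat.descFactorial_eq_zero_iff_lt.2 hzk]
    push_cast; ring
  · -- restrict to z ∈ [k, x]
    have hsub : ∑ z ∈ range (x+1), (z.descFactorial k : ℝ) * b α x z
        = ∑ z ∈ Finset.Ico k (x+1), (z.descFactorial k : ℝ) * b α x z := by
      rw [Finset.range_eq_Ico]
      apply (Finset.sum_subset (Finset.Ico_subset_Ico (Nat.zero_le _) le_rfl) _).symm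
      intro z hz hz'
      simp only [Finset.mem_Ico, not_and, not_le, Nat.lt_iff_add_one_le] at hz hz'
      have : z < k := by
        rcases lt_or_ge z k with h | h
        · exact h
        · exact absurd (hz' h) (by omega)
      rw [Nat.descFactorial_eq_zero_iff_lt.2 this]
      push_cast; ring
    rw [hsub, Finset.sum_Ico_eq_sum_range]
    have hlen : x + 1 - k = (x - k) + 1 := by omega
    rw [hlen]
    have key : ∀ w ∈ range ((x-k)+1),
        ((k+w).descFactorial k : ℝ) * b α x (k+w)
          = (x.descFactorial k : ℝ) * α ^ k * b α (x-k) w := by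
      intro w hw
      have hwx : w + k ≤ x := by
        have := Finset.mem_range.mp hw; omega
      have hnat := desc_choose x w k hwx
      unfold b
      have hcast : ((w+k).descFactorial k : ℝ) * (x.choose (w+k) : ℝ)
          = (x.descFactorial k : ℝ) * ((x-k).choose w : ℝ) := by exact_mod_cast hnat
      have hk : k + w = w + k := by omega
      rw [hk]
      have hpow : α ^ (w+k) = α ^ k * α ^ w := by rw [← pow_add]; ring_nf
      have hsub2 : x - (w+k) = (x-k) - w := by omega
      rw [hpow, hsub2]
      calc ((w+k).descFactorial k : ℝ) * ((x.choose (w+k) : ℝ) * (α ^ k * α ^ w) * (1-α)^((x-k)-w))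
          = (((w+k).descFactorial k : ℝ) * (x.choose (w+k):ℝ)) * (α ^ k * α ^ w * (1-α)^((x-k)-w)) := by ring
        _ = ((x.descFactorial k : ℝ) * ((x-k).choose w : ℝ)) * (α ^ k * α ^ w * (1-α)^((x-k)-w)) := by rw [hcast]
        _ = (x.descFactorial k : ℝ) * α ^ k * (((x-k).choose w : ℝ) * α ^ w * (1-α)^((x-k)-w)) := by ring
    rw [Finset.sum_congr rfl key, ← Finset.mul_sum, sum_b]
    ring

/-- mean of binomial -/
lemma sum_mul_b {α : ℝ} (x : ℕ) :
    ∑ z ∈ range (x+1), (z : ℝ) * b α x z = α * x := by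
  have := sum_desc_b (α := α) x 1
  simp only [Nat.descFactorial_one, pow_one] at this
  rw [this]; ring


/-- hockey stick for descFactorial -/
lemma hockey (m : ℕ) : ∀ z : ℕ, (m+1) * ∑ j ∈ range z, j.descFactorial m = z.descFactorial (m+1)
  | 0 => by simp
  | (z+1) => by
    rw [Finset.sum_range_succ, Nat.mul_add, hockey m z, Nat.succ_descFactorial_succ,
      Nat.descFactorial_succ]
    rcases le_or_gt m z with h | h
    · have e : z - m + (m+1) = z + 1 := by omega
      have : (z - m) * z.descFactorial m + (m+1) * z.descFactorial m
          = (z+1) * z.descFactorial m := by rw [← Nat.add_mul, e]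
      omega
    · rw [Nat.descFactorial_eq_zero_iff_lt.2 h]
      omega

lemma cast_descFactorial_succ (k x : ℕ) :
    (x.descFactorial (k+1) : ℝ) = ((x:ℝ) - k) * (x.descFactorial k : ℝ) := by
  rcases le_or_gt k x with h | h
  · rw [Nat.descFactorial_succ]
    push_cast [h]
    ring
  · rw [Nat.descFactorial_eq_zero_iff_lt.2 (by omega : x < k+1),
      Nat.descFactorial_eq_zero_iff_lt.2 h]
    simp

/-- F5' : x^(m+2) - x^(m+2 falling) ≤ x^(m+1) * (m+1)(m+2)/2 -/
lemma pow_sub_desc_le (x : ℕ) : ∀ m : ℕ,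
    (x:ℝ)^(m+2) - (x.descFactorial (m+2) : ℝ) ≤ (x:ℝ)^(m+1) * ((m+1)*(m+2)/2)
  | 0 => by
    rcases Nat.eq_zero_or_pos x with h | h
    · subst h; simp
    · rw [show (0:ℕ)+2 = 1+1 by rfl, cast_descFactorial_succ]
      simp only [Nat.descFactorial_one]
      have : (1:ℝ) ≤ (x:ℝ) := by exact_mod_cast h
      nlinarith [this]
  | (m+1) => by
    have ih := pow_sub_desc_le x m
    have hdesc : (x.descFactorial (m+3) : ℝ) = ((x:ℝ) - (m+2)) * (x.descFactorial (m+2) : ℝ) :=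
      by have := cast_descFactorial_succ (m+2) x; push_cast at this ⊢; convert this using 2
    have hle : (x.descFactorial (m+2) : ℝ) ≤ (x:ℝ)^(m+2) := by
      exact_mod_cast Nat.descFactorial_le_pow x (m+2)
    have hd0 : (0:ℝ) ≤ (x.descFactorial (m+2) : ℝ) := by positivity
    have hx0 : (0:ℝ) ≤ (x:ℝ) := by positivity
    have key : (x:ℝ)^(m+3) - (x.descFactorial (m+3) : ℝ)
        = (x:ℝ) * ((x:ℝ)^(m+2) - (x.descFactorial (m+2):ℝ)) + ((m:ℝ)+2) * (x.descFactorial (m+2):ℝ) := by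
      rw [hdesc]; push_cast; ring
    rw [key]
    have h1 : (x:ℝ) * ((x:ℝ)^(m+2) - (x.descFactorial (m+2):ℝ))
        ≤ (x:ℝ) * ((x:ℝ)^(m+1) * ((m+1)*(m+2)/2)) := by
      apply mul_le_mul_of_nonneg_left _ hx0
      exact_mod_cast ih
    have h2 : ((m:ℝ)+2) * (x.descFactorial (m+2):ℝ) ≤ ((m:ℝ)+2) * (x:ℝ)^(m+2) := by
      apply mul_le_mul_of_nonneg_left hle (by positivity)
    have h3 : (x:ℝ) * ((x:ℝ)^(m+1) * ((m+1)*(m+2)/2)) = (x:ℝ)^(m+2) * (((m:ℝ)+1)*((m:ℝ)+2)/2) := by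
      ring
    push_cast at h1 h2 ⊢
    nlinarith [h1, h2]


/-- the per-m bound -/
lemma perm_bound {α : ℝ} (hα : α ∈ Set.Ioo (0:ℝ) 1) {x : ℕ} (hx : 1 ≤ x) (m : ℕ) :
    (x:ℝ) * (α^(m+2)/((m+1)*(m+2)))
      - ∑ z ∈ range (x+1), b α x z * (∑ j ∈ range z, ((j:ℝ)/(x:ℝ))^(m+1)/(m+1))
      ≤ α^(m+2)/2 := by
  obtain ⟨hα0, hα1⟩ := hα
  have hX : (1:ℝ) ≤ (x:ℝ) := by exact_mod_cast hx
  have hX0 : (0:ℝ) < (x:ℝ) := by linarith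
  have hXp : (0:ℝ) < (x:ℝ)^(m+1) := by positivity
  -- step 1
  have step1 : ∀ z : ℕ, (z.descFactorial (m+2):ℝ)/((m+2) * (x:ℝ)^(m+1))
      ≤ ∑ j ∈ range z, ((j:ℝ)/(x:ℝ))^(m+1) := by
    intro z
    have h1 : ∑ j ∈ range z, ((j:ℝ))^(m+1) ≥ ∑ j ∈ range z, (j.descFactorial (m+1) : ℝ) := by
      apply Finset.sum_le_sum
      intro j _
      exact_mod_cast Nat.descFactorial_le_pow j (m+1)
    have h2 : ∑ j ∈ range z, (j.descFactorial (m+1) : ℝ) = (z.descFactorial (m+2):ℝ)/(m+2) := by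
      have := hockey (m+1) z
      have hc : ((m+2:ℕ):ℝ) * (∑ j ∈ range z, (j.descFactorial (m+1):ℝ)) = (z.descFactorial (m+2):ℝ) := by
        push_cast
        exact_mod_cast congrArg (fun n : ℕ => (n:ℝ)) this
      field_simp at hc ⊢
      push_cast at hc; linarith [hc]
    calc (z.descFactorial (m+2):ℝ)/((m+2) * (x:ℝ)^(m+1))
        = ((z.descFactorial (m+2):ℝ)/(m+2)) / (x:ℝ)^(m+1) := by
          rw [div_div]
      _ = (∑ j ∈ range z, (j.descFactorial (m+1) : ℝ)) / (x:ℝ)^(m+1) := by rw [h2]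
      _ ≤ (∑ j ∈ range z, ((j:ℝ))^(m+1)) / (x:ℝ)^(m+1) := by
          exact div_le_div_of_nonneg_right h1 hXp.le
      _ = ∑ j ∈ range z, ((j:ℝ)/(x:ℝ))^(m+1) := by
          rw [Finset.sum_div]
          exact Finset.sum_congr rfl fun j _ => by rw [div_pow]
  -- step 2
  have hb := fun z => b_nonneg ⟨hα0, hα1⟩ x z
  have step2 : ((x.descFactorial (m+2):ℝ) * α^(m+2)) / ((m+1)*(m+2)*(x:ℝ)^(m+1))
      ≤ ∑ z ∈ range (x+1), b α x z * (∑ j ∈ range z, ((j:ℝ)/(x:ℝ))^(m+1)/(m+1)) := by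
    have h3 : ∀ z ∈ range (x+1),
        (z.descFactorial (m+2):ℝ) * b α x z / ((m+1)*(m+2)*(x:ℝ)^(m+1))
          ≤ b α x z * (∑ j ∈ range z, ((j:ℝ)/(x:ℝ))^(m+1)/(m+1)) := by
      intro z _
      rw [← Finset.sum_div, show b α x z * ((∑ j ∈ range z, ((j:ℝ)/(x:ℝ))^(m+1)) / ((m:ℝ)+1))
        = (b α x z * ∑ j ∈ range z, ((j:ℝ)/(x:ℝ))^(m+1)) / ((m:ℝ)+1) from (mul_div_assoc _ _ _).symm]
      rw [div_le_div_iff₀ (by positivity) (by positivity)]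
      calc (z.descFactorial (m+2):ℝ) * b α x z * ((m:ℝ)+1)
          = (b α x z * ((m:ℝ)+1)) * (z.descFactorial (m+2):ℝ) := by ring
        _ ≤ (b α x z * ((m:ℝ)+1)) * ((∑ j ∈ range z, ((j:ℝ)/(x:ℝ))^(m+1)) * (((m:ℝ)+2) * (x:ℝ)^(m+1))) := by
            apply mul_le_mul_of_nonneg_left _ (by have := hb z; positivity)
            have := step1 z
            rw [div_le_iff₀ (by positivity)] at this
            linarith [this]
        _ = (b α x z * ∑ j ∈ range z, ((j:ℝ)/(x:ℝ))^(m+1)) * (((m:ℝ)+1)*((m:ℝ)+2)*(x:ℝ)^(m+1)) := by ring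
    calc ((x.descFactorial (m+2):ℝ) * α^(m+2)) / ((m+1)*(m+2)*(x:ℝ)^(m+1))
        = ∑ z ∈ range (x+1), (z.descFactorial (m+2):ℝ) * b α x z / ((m+1)*(m+2)*(x:ℝ)^(m+1)) := by
          rw [← Finset.sum_div, sum_desc_b]
      _ ≤ ∑ z ∈ range (x+1), b α x z * (∑ j ∈ range z, ((j:ℝ)/(x:ℝ))^(m+1)/(m+1)) :=
          Finset.sum_le_sum h3
  -- step 3
  have hF5 := pow_sub_desc_le x m
  have key : (x:ℝ) * (α^(m+2)/((m+1)*(m+2)))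
      - ((x.descFactorial (m+2):ℝ) * α^(m+2)) / ((m+1)*(m+2)*(x:ℝ)^(m+1)) ≤ α^(m+2)/2 := by
    have hαp : (0:ℝ) < α^(m+2) := by positivity
    rw [show (x:ℝ) * (α^(m+2)/((m+1)*(m+2))) = ((x:ℝ)^(m+2) * α^(m+2))/((m+1)*(m+2)*(x:ℝ)^(m+1)) by
      field_simp; ring]
    rw [div_sub_div_same, div_le_iff₀ (by positivity)]
    calc (x:ℝ)^(m+2) * α^(m+2) - (x.descFactorial (m+2):ℝ) * α^(m+2)
        = ((x:ℝ)^(m+2) - (x.descFactorial (m+2):ℝ)) * α^(m+2) := by ring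
      _ ≤ ((x:ℝ)^(m+1) * ((m+1)*(m+2)/2)) * α^(m+2) := by
          apply mul_le_mul_of_nonneg_right _ (le_of_lt hαp)
          push_cast at hF5 ⊢
          linarith [hF5]
      _ = α^(m+2)/2 * (((m:ℝ)+1)*((m:ℝ)+2)*(x:ℝ)^(m+1)) := by ring
  linarith [step2, key]


/-- power series for (1-α)log(1-α) + α -/
lemma hasSum_L {α : ℝ} (hα : α ∈ Set.Ioo (0:ℝ) 1) :
    HasSum (fun m : ℕ => α^(m+2)/((m+1)*(m+2)))
      ((1-α) * Real.log (1-α) + α) := by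
  obtain ⟨hα0, hα1⟩ := hα
  have habs : |α| < 1 := by rw [abs_lt]; constructor <;> linarith
  have h1 : HasSum (fun m : ℕ => α^(m+1)/(m+1)) (-Real.log (1-α)) :=
    Real.hasSum_pow_div_log_of_abs_lt_one habs
  have h2 : HasSum (fun m : ℕ => α^(m+2)/(m+1)) (α * -Real.log (1-α)) := by
    have := h1.mul_left α
    convert this using 2 with m
    on_goal 1 => rfl
    rw [pow_succ]
    ring
  have h3 : HasSum (fun m : ℕ => α^(m+2)/(m+2)) (-Real.log (1-α) - α) := by
    have h := (hasSum_nat_add_iff' (f := fun m : ℕ => α^(m+1)/(m+1)) 1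
      (g := -Real.log (1-α))).2 h1
    simp only [Finset.sum_range_one] at h
    norm_num at h
    convert h using 2 with m
    all_goals try rfl
    push_cast
    ring_nf
  have h4 := h2.sub h3
  have hfe : (fun m : ℕ => α^(m+2)/((m+1)*(m+2)))
      = fun m : ℕ => α^(m+2)/(m+1) - α^(m+2)/(m+2) := by
    funext m
    have hm1 : ((m:ℝ)+1) ≠ 0 := by positivity
    have hm2 : ((m:ℝ)+2) ≠ 0 := by positivity
    field_simp
    ring
  rw [hfe]
  convert h4 using 1
  all_goals try rfl
  ring


lemma Kx_le {α : ℝ} (hα : α ∈ Set.Ioo (0:ℝ) 1) {x : ℕ} (hx : 1 ≤ x) :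
    ∑ z ∈ range (x+1), b α x z * (∑ j ∈ range z, Real.log (1 - (j:ℝ)/(x:ℝ)))
      + (x:ℝ) * ((1-α) * Real.log (1-α) + α) ≤ α^2/(2*(1-α)) := by
  obtain ⟨hα0, hα1⟩ := hα
  have hX : (1:ℝ) ≤ (x:ℝ) := by exact_mod_cast hx
  have hX0 : (0:ℝ) < (x:ℝ) := by linarith
  -- series for each c-term
  have hsc : ∀ z ∈ range (x+1),
      HasSum (fun m : ℕ => -(∑ j ∈ range z, ((j:ℝ)/(x:ℝ))^(m+1)/(m+1)))
        (∑ j ∈ range z, Real.log (1 - (j:ℝ)/(x:ℝ))) := by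
    intro z hz
    have hzx : z ≤ x := Nat.lt_succ_iff.mp (Finset.mem_range.mp hz)
    have h := hasSum_sum (s := range z)
      (f := fun (j : ℕ) (m : ℕ) => -(((j:ℝ)/(x:ℝ))^(m+1)/(m+1)))
      (a := fun (j : ℕ) => Real.log (1 - (j:ℝ)/(x:ℝ)))
      (fun j hj => by
        have hjx : j < x := lt_of_lt_of_le (Finset.mem_range.mp hj) hzx
        have h0 : (0:ℝ) ≤ (j:ℝ)/(x:ℝ) := by positivity
        have h1 : (j:ℝ)/(x:ℝ) < 1 := by
          rw [div_lt_one hX0]; exact_mod_cast hjx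
        have habs : |(j:ℝ)/(x:ℝ)| < 1 := by rw [abs_of_nonneg h0]; exact h1
        simpa using (Real.hasSum_pow_div_log_of_abs_lt_one habs).neg)
    simpa [Finset.sum_neg_distrib] using h
  have hsbc := hasSum_sum (s := range (x+1))
    (f := fun (z : ℕ) (m : ℕ) => b α x z * -(∑ j ∈ range z, ((j:ℝ)/(x:ℝ))^(m+1)/(m+1)))
    (a := fun (z : ℕ) => b α x z * ∑ j ∈ range z, Real.log (1 - (j:ℝ)/(x:ℝ)))
    (fun z hz => (hsc z hz).mul_left _)
  beta_reduce at hsbc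
  have htot := ((hasSum_L ⟨hα0, hα1⟩).mul_left (x:ℝ)).add hsbc
  have hgeo : HasSum (fun m : ℕ => α^(m+2)/2) (α^2/(2*(1-α))) := by
    have h := (hasSum_geometric_of_lt_one hα0.le hα1).mul_left (α^2/2)
    have hfe : (fun m : ℕ => α^2/2 * α^m) = fun m : ℕ => α^(m+2)/2 := by
      funext m; rw [pow_add]; ring
    rw [hfe] at h
    have hne : (1:ℝ) - α ≠ 0 := by linarith
    have hv : α^2/2 * (1-α)⁻¹ = α^2/(2*(1-α)) := by field_simp
    rwa [hv] at h
  have := hasSum_le (f := fun m : ℕ => (x:ℝ) * (α^(m+2)/((m+1)*(m+2)))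
        + ∑ z ∈ range (x+1), b α x z * -(∑ j ∈ range z, ((j:ℝ)/(x:ℝ))^(m+1)/(m+1)))
      (g := fun m : ℕ => α^(m+2)/2) ?_ htot hgeo
  · linarith [this]
  · intro m
    have hp := perm_bound ⟨hα0, hα1⟩ hx m
    simp only [mul_neg, Finset.sum_neg_distrib]
    linarith [hp]


/-- the binomial KL divergence vs Poisson, as a finite sum -/
def Dx (α lam : ℝ) (x : ℕ) : ℝ :=
  ∑ z ∈ range (x+1), b α x z * Real.log (b α x z / poissonPMF lam z)

lemma poissonPMF_pos {lam : ℝ} (hlam : 0 < lam) (z : ℕ) : 0 < poissonPMF lam z := by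
  unfold poissonPMF
  have : (0:ℝ) < (z.factorial : ℝ) := by exact_mod_cast z.factorial_pos
  positivity

lemma log_poissonPMF {lam : ℝ} (hlam : 0 < lam) (z : ℕ) :
    Real.log (poissonPMF lam z) = -lam + z * Real.log lam - Real.log (z.factorial) := by
  unfold poissonPMF
  have hz : (0:ℝ) < (z.factorial : ℝ) := by exact_mod_cast z.factorial_pos
  rw [Real.log_div (by positivity) (by positivity),
    Real.log_mul (by positivity) (by positivity), Real.log_exp, Real.log_pow]

lemma log_b {α : ℝ} (hα : α ∈ Set.Ioo (0:ℝ) 1) {x z : ℕ} (hz : z ≤ x) :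
    Real.log (b α x z) = Real.log (x.descFactorial z) - Real.log (z.factorial)
      + z * Real.log α + ((x:ℝ) - z) * Real.log (1-α) := by
  obtain ⟨hα0, hα1⟩ := hα
  have hβ : (0:ℝ) < 1 - α := by linarith
  have hch : 0 < x.choose z := Nat.choose_pos hz
  have hchR : (0:ℝ) < (x.choose z : ℝ) := by exact_mod_cast hch
  unfold b
  rw [Real.log_mul (by positivity) (by positivity),
    Real.log_mul (by positivity) (by positivity), Real.log_pow, Real.log_pow]
  have hdesc : (x.descFactorial z : ℝ) = (z.factorial : ℝ) * (x.choose z : ℝ) := by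
    exact_mod_cast Nat.descFactorial_eq_factorial_mul_choose x z
  have hzf : (0:ℝ) < (z.factorial : ℝ) := by exact_mod_cast z.factorial_pos
  have hlogch : Real.log (x.choose z) = Real.log (x.descFactorial z) - Real.log (z.factorial) := by
    rw [hdesc, Real.log_mul (by positivity) (by positivity)]
    ring
  rw [hlogch]
  have hxz : ((x - z : ℕ) : ℝ) = (x:ℝ) - z := by
    push_cast [hz]; ring
  rw [hxz]

lemma log_desc {x z : ℕ} (hx : 1 ≤ x) (hz : z ≤ x) :
    Real.log (x.descFactorial z)
      = (∑ j ∈ range z, Real.log (1 - (j:ℝ)/(x:ℝ))) + z * Real.log x := by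
  have hX0 : (0:ℝ) < (x:ℝ) := by exact_mod_cast hx
  have hcast : (x.descFactorial z : ℝ) = ∏ j ∈ range z, ((x:ℝ) - j) := by
    rw [Nat.descFactorial_eq_prod_range]
    push_cast
    apply Finset.prod_congr rfl
    intro j hj
    have : j < z := Finset.mem_range.mp hj
    have : j ≤ x := by omega
    push_cast [this]
    ring
  rw [hcast, Real.log_prod]
  · have : ∀ j ∈ range z, Real.log ((x:ℝ) - j)
        = Real.log (1 - (j:ℝ)/(x:ℝ)) + Real.log x := by
      intro j hj
      have hjz : j < z := Finset.mem_range.mp hj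
      have hjx : j < x := by omega
      have hjxR : (j:ℝ) < (x:ℝ) := by exact_mod_cast hjx
      have h1 : (0:ℝ) < 1 - (j:ℝ)/(x:ℝ) := by
        rw [sub_pos, div_lt_one hX0]; exact hjxR
      rw [← Real.log_mul (by positivity) (by positivity)]
      congr 1
      field_simp
    rw [Finset.sum_congr rfl this, Finset.sum_add_distrib, Finset.sum_const, card_range]
    push_cast
    ring
  · intro j hj
    have hjz : j < z := Finset.mem_range.mp hj
    have hjx : j < x := by omega
    have : (j:ℝ) < (x:ℝ) := by exact_mod_cast hjx
    intro hc
    linarith [hc]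

/-- the key bound on the binomial-Poisson divergence -/
lemma Dx_le {α lam : ℝ} (hα : α ∈ Set.Ioo (0:ℝ) 1) (hlam : 0 < lam) (x : ℕ) :
    Dx α lam x ≤ α^2/(2*(1-α)) + (α*x - lam)^2/lam := by
  obtain ⟨hα0, hα1⟩ := hα
  have hβ : (0:ℝ) < 1 - α := by linarith
  rcases Nat.eq_zero_or_pos x with hx0 | hx
  · subst hx0
    have hD0 : Dx α lam 0 = lam := by
      unfold Dx
      rw [show (0:ℕ)+1 = 1 from rfl, Finset.sum_range_one]
      have hb0 : b α 0 0 = 1 := by unfold b; simp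
      rw [hb0, one_div, Real.log_inv, log_poissonPMF hlam]
      norm_num
    rw [hD0]
    have h1 : (0:ℝ) ≤ α^2/(2*(1-α)) := by positivity
    have h2 : (α*((0:ℕ):ℝ) - lam)^2/lam = lam := by
      rw [show (α*((0:ℕ):ℝ)-lam)^2 = lam^2 from by push_cast; ring, sq, mul_div_assoc,
        div_self hlam.ne', mul_one]
    rw [h2]
    linarith
  · -- x ≥ 1
    have hX0 : (0:ℝ) < (x:ℝ) := by exact_mod_cast hx
    have hax : (0:ℝ) < α * x := by positivity
    set K1 : ℝ := Real.log x + Real.log α - Real.log lam with hK1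
    -- decompose the log
    have hdecomp : ∀ z ∈ range (x+1),
        b α x z * Real.log (b α x z / poissonPMF lam z)
          = b α x z * (∑ j ∈ range z, Real.log (1 - (j:ℝ)/(x:ℝ)))
            + (((z:ℝ) * b α x z) * K1
            + (((x:ℝ) * b α x z - (z:ℝ) * b α x z) * Real.log (1-α)
            + b α x z * lam)) := by
      intro z hz
      have hzx : z ≤ x := Nat.lt_succ_iff.mp (Finset.mem_range.mp hz)
      rw [Real.log_div (ne_of_gt (b_pos ⟨hα0, hα1⟩ hzx)) (ne_of_gt (poissonPMF_pos hlam z)),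
        log_b ⟨hα0, hα1⟩ hzx, log_poissonPMF hlam, log_desc hx hzx, hK1]
      ring
    have hDx : Dx α lam x
        = (∑ z ∈ range (x+1), b α x z * (∑ j ∈ range z, Real.log (1 - (j:ℝ)/(x:ℝ))))
          + ((α*x) * K1 + (((x:ℝ)*1 - α*x) * Real.log (1-α) + 1*lam)) := by
      unfold Dx
      have hA : ∑ z ∈ range (x+1), ((z:ℝ) * b α x z) * K1 = (α*(x:ℝ))*K1 := by
        rw [← Finset.sum_mul, sum_mul_b]
      have hB : ∑ z ∈ range (x+1), ((x:ℝ) * b α x z - (z:ℝ) * b α x z) * Real.log (1-α)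
          = ((x:ℝ)*1 - α*(x:ℝ)) * Real.log (1-α) := by
        rw [← Finset.sum_mul, Finset.sum_sub_distrib, ← Finset.mul_sum, sum_b, sum_mul_b]
      have hC : ∑ z ∈ range (x+1), b α x z * lam = 1 * lam := by
        rw [← Finset.sum_mul, sum_b]
      rw [Finset.sum_congr rfl hdecomp, Finset.sum_add_distrib, Finset.sum_add_distrib,
        Finset.sum_add_distrib, hA, hB, hC]
    rw [hDx]
    -- use Kx_le for the first chunk
    have hK := Kx_le ⟨hα0, hα1⟩ hx
    -- handle the mean part
    have hlogmul : Real.log (α*(x:ℝ)) = Real.log α + Real.log (x:ℝ) := by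
      rw [Real.log_mul (by positivity) (by positivity)]
    have hlog2 : Real.log (α*(x:ℝ)/lam) = Real.log (α*(x:ℝ)) - Real.log lam :=
      Real.log_div (by positivity) hlam.ne'
    have hlin : Real.log (α*(x:ℝ)/lam) ≤ α*(x:ℝ)/lam - 1 :=
      Real.log_le_sub_one_of_pos (by positivity)
    have hmean : (α*(x:ℝ)) * K1 - α*(x:ℝ) + lam ≤ (α*(x:ℝ) - lam)^2/lam := by
      have e1 : (α*(x:ℝ)) * K1 = (α*(x:ℝ)) * Real.log (α*(x:ℝ)/lam) := by
        rw [hlog2, hlogmul, hK1]; ring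
      rw [e1]
      have e2 : (α*(x:ℝ)) * Real.log (α*(x:ℝ)/lam) ≤ (α*(x:ℝ)) * (α*(x:ℝ)/lam - 1) :=
        mul_le_mul_of_nonneg_left hlin hax.le
      have e3 : (α*(x:ℝ)) * (α*(x:ℝ)/lam - 1) - α*(x:ℝ) + lam = (α*(x:ℝ) - lam)^2/lam := by
        field_simp
        ring
      linarith
    have e4 : ((x:ℝ)*1 - α*x) * Real.log (1-α) = (x:ℝ)*((1-α) * Real.log (1-α) + α) - α*(x:ℝ) := by
      ring
    linarith [hK, hmean]


lemma phi_term_nonneg {t B : ℝ} (ht : 0 ≤ t) (hB : 0 < B) :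
    0 ≤ t * Real.log (t / B) - t + B := by
  rcases eq_or_lt_of_le ht with h | h
  · simp [← h]
    linarith
  · have hu : 0 < t / B := by positivity
    have := Real.one_sub_inv_le_log_of_pos hu
    have hinv : (t/B)⁻¹ = B/t := by
      rw [inv_div]
    rw [hinv] at this
    have h2 : t * (1 - B/t) ≤ t * Real.log (t/B) := mul_le_mul_of_nonneg_left this h.le
    have h3 : t * (1 - B/t) = t - B := by field_simp
    linarith

lemma jensen_tsum {w t : ℕ → ℝ} {B A : ℝ} (hw : ∀ x, 0 ≤ w x) (ht : ∀ x, 0 ≤ t x) (hB : 0 < B)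
    (hW : HasSum w 1) (hA : HasSum (fun x => w x * t x) A)
    (hsum : Summable fun x => w x * (t x * Real.log (t x / B) - t x + B)) :
    A * Real.log (A / B) - A + B ≤ ∑' x, w x * (t x * Real.log (t x / B) - t x + B) := by
  set φ : ℝ → ℝ := fun u => u * Real.log u - u + 1 with hφ
  have hφc : Continuous φ :=
    (Real.continuous_mul_log.sub continuous_id).add continuous_const
  have hφconv : ConvexOn ℝ (Set.Ici 0) φ := by
    have h1 : ConvexOn ℝ (Set.Ici 0) (fun u : ℝ => u * Real.log u) := Real.convexOn_mul_log
    have h2 : ConcaveOn ℝ (Set.Ici 0) (fun u : ℝ => u - 1) :=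
      (concaveOn_id (convex_Ici 0)).sub (convexOn_const 1 (convex_Ici 0))
    have := h1.sub h2
    convert this using 1
    all_goals try rfl
    funext u
    show u * Real.log u - u + 1 = u * Real.log u - (u - 1)
    ring
  -- per-finset Jensen inequality
  have key : ∀ s : Finset ℕ,
      (∑ x ∈ s, w x) * B * φ ((∑ x ∈ s, w x * t x) / ((∑ x ∈ s, w x) * B))
        ≤ ∑ x ∈ s, w x * (t x * Real.log (t x / B) - t x + B) := by
    intro s
    have hident : ∀ x ∈ s, w x * (t x * Real.log (t x / B) - t x + B)
        = B * (w x * φ (t x / B)) := by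
      intro x _
      show w x * (t x * Real.log (t x / B) - t x + B)
          = B * (w x * (t x / B * Real.log (t x / B) - t x / B + 1))
      have hBne : B ≠ 0 := hB.ne'
      field_simp
      try ring
    rw [Finset.sum_congr rfl hident, ← Finset.mul_sum]
    rcases eq_or_lt_of_le (Finset.sum_nonneg (fun x _ => hw x)) with hWs | hWs
    · -- sum of weights is zero
      have hzero : ∀ x ∈ s, w x = 0 := by
        intro x hx
        exact (Finset.sum_eq_zero_iff_of_nonneg (fun y _ => hw y)).mp hWs.symm x hx
      have h1 : ∑ x ∈ s, w x * t x = 0 :=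
        Finset.sum_eq_zero fun x hx => by rw [hzero x hx]; ring
      have h2 : ∑ x ∈ s, w x * φ (t x / B) = 0 :=
        Finset.sum_eq_zero fun x hx => by rw [hzero x hx]; ring
      rw [← hWs, h1, h2]
      simp
    · have hJ := hφconv.map_centerMass_le (t := s) (w := w) (p := fun x => t x / B)
        (fun x _ => hw x) hWs (fun x _ => by
          have := ht x
          have : 0 ≤ t x / B := by positivity
          simpa using this)
      simp only [Finset.centerMass, smul_eq_mul, Function.comp] at hJ
      set Ws := ∑ x ∈ s, w x
      have harg : Ws⁻¹ * ∑ x ∈ s, w x * (t x / B) = (∑ x ∈ s, w x * t x) / (Ws * B) := by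
        rw [show ∑ x ∈ s, w x * (t x / B) = (∑ x ∈ s, w x * t x) / B from by
          rw [Finset.sum_div]; exact Finset.sum_congr rfl fun x _ => by ring]
        field_simp
      rw [harg] at hJ
      have := mul_le_mul_of_nonneg_left hJ (by positivity : (0:ℝ) ≤ Ws * B)
      calc Ws * B * φ ((∑ x ∈ s, w x * t x) / (Ws * B))
          ≤ Ws * B * (Ws⁻¹ * ∑ x ∈ s, w x * φ (t x / B)) := this
        _ = B * ∑ x ∈ s, w x * φ (t x / B) := by
            field_simp
            try ring
  -- limits
  have hR := hsum.hasSum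
  have hlim1 : Tendsto (fun s : Finset ℕ => ∑ x ∈ s, w x * (t x * Real.log (t x / B) - t x + B))
      atTop (𝓝 (∑' x, w x * (t x * Real.log (t x / B) - t x + B))) := hR
  have hlimW : Tendsto (fun s : Finset ℕ => ∑ x ∈ s, w x) atTop (𝓝 1) := hW
  have hlimA : Tendsto (fun s : Finset ℕ => ∑ x ∈ s, w x * t x) atTop (𝓝 A) := hA
  have hlimWB : Tendsto (fun s : Finset ℕ => (∑ x ∈ s, w x) * B) atTop (𝓝 (1 * B)) :=
    hlimW.mul tendsto_const_nhds
  have hBne : (1:ℝ) * B ≠ 0 := by positivity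
  have hlimarg : Tendsto (fun s : Finset ℕ =>
      (∑ x ∈ s, w x * t x) / ((∑ x ∈ s, w x) * B)) atTop (𝓝 (A / (1 * B))) :=
    hlimA.div hlimWB hBne
  have hlimφ : Tendsto (fun s : Finset ℕ =>
      φ ((∑ x ∈ s, w x * t x) / ((∑ x ∈ s, w x) * B))) atTop (𝓝 (φ (A / (1 * B)))) :=
    (hφc.tendsto _).comp hlimarg
  have hlimLHS : Tendsto (fun s : Finset ℕ =>
      (∑ x ∈ s, w x) * B * φ ((∑ x ∈ s, w x * t x) / ((∑ x ∈ s, w x) * B)))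
      atTop (𝓝 (1 * B * φ (A / (1 * B)))) := hlimWB.mul hlimφ
  have hfinal := le_of_tendsto_of_tendsto' hlimLHS hlim1 key
  have hval : 1 * B * φ (A / (1 * B)) = A * Real.log (A / B) - A + B := by
    show 1 * B * (A / (1*B) * Real.log (A / (1*B)) - A / (1*B) + 1)
        = A * Real.log (A / B) - A + B
    have hBne : B ≠ 0 := hB.ne'
    rw [one_mul]
    field_simp
    try ring
  linarith [hfinal, hval.symm.le]


lemma hasSum_poissonPMF (lam : ℝ) : HasSum (poissonPMF lam) 1 := by
  have h1 : Real.exp lam = ∑' n : ℕ, lam ^ n / n.factorial := by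
    rw [Real.exp_eq_exp_ℝ, NormedSpace.exp_eq_tsum_div]
  have h2 : HasSum (fun n : ℕ => lam ^ n / n.factorial) (Real.exp lam) := by
    rw [h1]
    exact (Real.summable_pow_div_factorial lam).hasSum
  have h3 := h2.mul_left (Real.exp (-lam))
  have h4 : (fun n : ℕ => Real.exp (-lam) * (lam ^ n / n.factorial)) = poissonPMF lam := by
    funext n; unfold poissonPMF; ring
  rw [h4] at h3
  rwa [← Real.exp_add, neg_add_cancel, Real.exp_zero] at h3

def eterm (α lam : ℝ) (x z : ℕ) : ℝ :=
  b α x z * Real.log (b α x z / poissonPMF lam z) - b α x z + poissonPMF lam z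

lemma eterm_nonneg {α lam : ℝ} (hα : α ∈ Set.Ioo (0:ℝ) 1) (hlam : 0 < lam) (x z : ℕ) :
    0 ≤ eterm α lam x z :=
  phi_term_nonneg (b_nonneg hα x z) (poissonPMF_pos hlam z)

lemma hasSum_eterm {α lam : ℝ} (x : ℕ) :
    HasSum (eterm α lam x) (Dx α lam x) := by
  have h1 : HasSum (fun z => b α x z * Real.log (b α x z / poissonPMF lam z) - b α x z)
      (Dx α lam x - 1) := by
    have hz : ∀ z ∉ range (x+1),
        b α x z * Real.log (b α x z / poissonPMF lam z) - b α x z = 0 := by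
      intro z hz
      have : x < z := by simpa using hz
      rw [b_eq_zero this]
      ring
    have := hasSum_sum_of_ne_finset_zero (L := SummationFilter.unconditional ℕ) hz
    rwa [Finset.sum_sub_distrib, sum_b, ← Dx] at this
  have h2 := h1.add (hasSum_poissonPMF lam)
  have h3 : (fun z => (b α x z * Real.log (b α x z / poissonPMF lam z) - b α x z)
      + poissonPMF lam z) = eterm α lam x := by
    funext z; unfold eterm; ring
  rw [h3] at h2
  rwa [sub_add_cancel] at h2


end ThinAux

open ThinAux in
/-- If `P` has mean `λ/α` and variance `σ²`, then
`D(T_α(P)‖Po(λ)) ≤ α²·(1/(2(1−α)) + σ²/λ)`. -/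
theorem klDiv_thin_le_var (P : ℕ → ℝ) (hP : IsPMF P) (lam α σ2 : ℝ)
    (hlam : 0 < lam) (hα : α ∈ Set.Ioo (0 : ℝ) 1)
    (hmean : HasSum (fun x : ℕ => P x * (x : ℝ)) (lam / α))
    (hvar : HasSum (fun x : ℕ => P x * ((x : ℝ) - lam / α) ^ 2) σ2) :
    klDiv (thin α P) (poissonPMF lam) ≤ α ^ 2 * (1 / (2 * (1 - α)) + σ2 / lam) := by
  obtain ⟨hP0, hPsum⟩ := hP
  obtain ⟨hα0, hα1⟩ := hα
  have hαIoo : α ∈ Set.Ioo (0:ℝ) 1 := ⟨hα0, hα1⟩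
  set po := poissonPMF lam with hpo
  have hpo_pos : ∀ z, 0 < po z := poissonPMF_pos hlam
  have hpo_sum : HasSum po 1 := hasSum_poissonPMF lam
  set H : ℕ → ℕ → ℝ := fun x z => P x * eterm α lam x z with hH
  have hH0 : ∀ x z, 0 ≤ H x z := fun x z =>
    mul_nonneg (hP0 x) (eterm_nonneg hαIoo hlam x z)
  have hHx : ∀ x, HasSum (H x) (P x * Dx α lam x) := fun x =>
    (hasSum_eterm x).mul_left (P x)
  -- bound on Dx and the dominating summable sequence
  set C : ℕ → ℝ := fun x => α^2/(2*(1-α)) + (α*x - lam)^2/lam with hC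
  have hDxC : ∀ x, Dx α lam x ≤ C x := fun x => Dx_le hαIoo hlam x
  have hDx0 : ∀ x, 0 ≤ Dx α lam x := fun x =>
    (hasSum_eterm x).nonneg (fun z => eterm_nonneg hαIoo hlam x z)
  have hCsum : HasSum (fun x => P x * C x) (α^2/(2*(1-α)) + σ2 * (α^2/lam)) := by
    have h1 : HasSum (fun x => P x * (α^2/(2*(1-α)))) (1 * (α^2/(2*(1-α)))) :=
      hPsum.mul_right _
    have h2 : HasSum (fun x => (P x * ((x:ℝ) - lam/α)^2) * (α^2/lam)) (σ2 * (α^2/lam)) :=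
      hvar.mul_right _
    have h3 := h1.add h2
    have h4 : (fun x => P x * (α^2/(2*(1-α))) + (P x * ((x:ℝ) - lam/α)^2) * (α^2/lam))
        = fun x => P x * C x := by
      funext x
      have hαne : α ≠ 0 := hα0.ne'
      have hlamne : lam ≠ 0 := hlam.ne'
      rw [hC]
      field_simp
    rw [h4] at h3
    rwa [one_mul] at h3
  have hPD_le : ∀ x, P x * Dx α lam x ≤ P x * C x := fun x =>
    mul_le_mul_of_nonneg_left (hDxC x) (hP0 x)
  have hPD0 : ∀ x, 0 ≤ P x * Dx α lam x := fun x => mul_nonneg (hP0 x) (hDx0 x)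
  have hPDsum : Summable (fun x => P x * Dx α lam x) :=
    Summable.of_nonneg_of_le hPD0 hPD_le hCsum.summable
  -- double summability of H
  have hHuncurry : Summable (Function.uncurry H) := by
    refine (summable_prod_of_nonneg (fun p => hH0 p.1 p.2)).mpr ⟨fun x => (hHx x).summable, ?_⟩
    apply Summable.congr hPDsum
    intro x
    exact ((hHx x).tsum_eq).symm
  have hHswap : Summable (fun p : ℕ × ℕ => H p.2 p.1) := by
    have := hHuncurry.prod_symm
    apply this.congr
    intro p
    rfl
  have hHcol : ∀ z, Summable (fun x => H x z) := fun z => hHswap.prod_factor z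
  set G : ℕ → ℝ := fun z => ∑' x, H x z with hG
  have hGsum : Summable G := by
    have := (summable_prod_of_nonneg (f := fun p : ℕ × ℕ => H p.2 p.1)
      (fun p => hH0 p.2 p.1)).mp hHswap
    exact this.2
  -- Q facts
  set Q : ℕ → ℝ := thin α P with hQdef
  have hQz : ∀ z, HasSum (fun x => P x * b α x z) (Q z) := by
    intro z
    have hsummable : Summable (fun x => P x * b α x z) :=
      Summable.of_nonneg_of_le (fun x => mul_nonneg (hP0 x) (b_nonneg hαIoo x z))
        (fun x => mul_le_of_le_one_right (hP0 x) (b_le_one hαIoo x z)) hPsum.summable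
    have heq : Q z = ∑' x, P x * b α x z := by
      rw [hQdef]
      unfold thin
      exact tsum_congr fun x => by unfold ThinAux.b; ring
    rw [heq]
    exact hsummable.hasSum
  have hQ0 : ∀ z, 0 ≤ Q z := fun z =>
    (hQz z).nonneg fun x => mul_nonneg (hP0 x) (b_nonneg hαIoo x z)
  -- HasSum Q 1 via Fubini
  have hFuncurry : Summable (Function.uncurry (fun x z => P x * b α x z)) := by
    refine (summable_prod_of_nonneg (fun p => mul_nonneg (hP0 p.1) (b_nonneg hαIoo p.1 p.2))).mpr
      ⟨fun x => ((hasSum_b x).mul_left (P x)).summable, ?_⟩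
    apply Summable.congr hPsum.summable
    intro x
    rw [((hasSum_b x).mul_left (P x)).tsum_eq, mul_one]
  have hQsum1 : HasSum Q 1 := by
    have hQsummable : Summable Q := by
      have h := (summable_prod_of_nonneg
        (f := fun p : ℕ × ℕ => P p.2 * b α p.2 p.1)
        (fun p => mul_nonneg (hP0 p.2) (b_nonneg hαIoo p.2 p.1))).mp
        (hFuncurry.prod_symm.congr (fun p => rfl))
      apply Summable.congr h.2
      intro z
      exact (hQz z).tsum_eq
    have htsum : ∑' z, Q z = 1 := by
      have e1 : ∑' z, Q z = ∑' z, ∑' x, P x * b α x z :=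
        tsum_congr fun z => ((hQz z).tsum_eq).symm
      have e2 : ∑' (z : ℕ), ∑' (x : ℕ), P x * b α x z
          = ∑' (x : ℕ), ∑' (z : ℕ), P x * b α x z := Summable.tsum_comm hFuncurry
      have e3 : ∑' (x : ℕ), ∑' (z : ℕ), P x * b α x z = ∑' x, P x := by
        apply tsum_congr
        intro x
        rw [((hasSum_b x).mul_left (P x)).tsum_eq, mul_one]
      rw [e1, e2, e3, hPsum.tsum_eq]
    rw [← htsum]
    exact hQsummable.hasSum
  -- the key pointwise inequality
  set g : ℕ → ℝ := fun z => Q z * Real.log (Q z / po z) - Q z + po z with hg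
  have hg_le : ∀ z, g z ≤ G z := by
    intro z
    have hcolsum : Summable (fun x =>
        P x * (b α x z * Real.log (b α x z / po z) - b α x z + po z)) :=
      (hHcol z).congr (fun x => rfl)
    have hj := jensen_tsum hP0 (fun x => b_nonneg hαIoo x z) (hpo_pos z) hPsum (hQz z) hcolsum
    calc g z = Q z * Real.log (Q z / po z) - Q z + po z := rfl
      _ ≤ ∑' x, P x * (b α x z * Real.log (b α x z / po z) - b α x z + po z) := hj
      _ = G z := tsum_congr (fun x => rfl)
  have hg0 : ∀ z, 0 ≤ g z := fun z => phi_term_nonneg (hQ0 z) (hpo_pos z)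
  have hgsum : Summable g := Summable.of_nonneg_of_le hg0 hg_le hGsum
  have hQpo : HasSum (fun z => Q z - po z) 0 := by
    have h := hQsum1.sub hpo_sum
    simpa using h
  have hkl : klDiv Q po = ∑' z, g z := by
    have hterm : ∀ z : ℕ, Q z * Real.log (Q z / po z) = g z + (Q z - po z) := by
      intro z
      rw [hg]
      ring
    unfold klDiv
    rw [tsum_congr hterm, Summable.tsum_add hgsum hQpo.summable, hQpo.tsum_eq, add_zero]
  have hGle : ∑' z, g z ≤ ∑' z, G z := Summable.tsum_le_tsum hg_le hgsum hGsum
  have hGval : ∑' z, G z = ∑' x, P x * Dx α lam x := by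
    have e2 : ∑' (z : ℕ), ∑' (x : ℕ), H x z = ∑' (x : ℕ), ∑' (z : ℕ), H x z :=
      Summable.tsum_comm hHuncurry
    have e3 : ∑' (x : ℕ), ∑' (z : ℕ), H x z = ∑' x, P x * Dx α lam x :=
      tsum_congr fun x => (hHx x).tsum_eq
    rw [hG]
    rw [e2, e3]
  have hfinal : ∑' x, P x * Dx α lam x ≤ α^2/(2*(1-α)) + σ2 * (α^2/lam) := by
    calc ∑' x, P x * Dx α lam x ≤ ∑' x, P x * C x :=
          Summable.tsum_le_tsum hPD_le hPDsum hCsum.summable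
      _ = α^2/(2*(1-α)) + σ2 * (α^2/lam) := hCsum.tsum_eq
  have halg : α^2 * (1/(2*(1-α)) + σ2/lam) = α^2/(2*(1-α)) + σ2 * (α^2/lam) := by
    ring
  show klDiv Q po ≤ α ^ 2 * (1 / (2 * (1 - α)) + σ2 / lam)
  rw [hkl, halg]
  linarith
end
end

section
/- (Characterization of the Poisson distribution) Let P be a distribution on ℕ with mean λ > 0. If P = U_α^λ(P) for some α ∈ (0,1), then P = Po(λ). -/
set_option maxHeartbeats 1000000


open scoped BigOperators
open Filter Topology

noncomputable section

/-- The "thinning Markov chain" operator `U_α^λ(P) = T_α(P) * Po((1−α)λ)`. -/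
def Uop (α lam : ℝ) (P : ℕ → ℝ) : ℕ → ℝ :=
  conv (thin α P) (poissonPMF ((1 - α) * lam))

/-! ### Auxiliary lemmas -/

lemma summable_pmf_pow {P : ℕ → ℝ} (hP0 : ∀ x, 0 ≤ P x) (hPs : Summable P)
    {t : ℝ} (ht0 : 0 ≤ t) (ht1 : t ≤ 1) : Summable (fun x : ℕ => P x * t ^ x) := by
  refine Summable.of_nonneg_of_le (fun x => mul_nonneg (hP0 x) (pow_nonneg ht0 x))
    (fun x => ?_) hPs
  calc P x * t ^ x ≤ P x * 1 :=
        mul_le_mul_of_nonneg_left (pow_le_one₀ ht0 ht1) (hP0 x)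
    _ = P x := mul_one _

lemma thin_nonneg_s14 {P : ℕ → ℝ} (hP0 : ∀ x, 0 ≤ P x) {α : ℝ} (hα0 : 0 ≤ α) (hα1 : α ≤ 1)
    (z : ℕ) : 0 ≤ thin α P z := by
  refine tsum_nonneg fun x => ?_
  have h1 : (0:ℝ) ≤ 1 - α := by linarith
  exact mul_nonneg (mul_nonneg (mul_nonneg (hP0 x) (Nat.cast_nonneg _))
    (pow_nonneg hα0 _)) (pow_nonneg h1 _)

/-- PGF of the thinning: `∑ z, T_α(P)(z) s^z = f(1 - α(1-s))`. -/
lemma thin_pgf {P : ℕ → ℝ} (hP0 : ∀ x, 0 ≤ P x) (hPs : Summable P)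
    {α s : ℝ} (hα0 : 0 ≤ α) (hα1 : α ≤ 1) (hs0 : 0 ≤ s) (hs1 : s ≤ 1) :
    HasSum (fun z => thin α P z * s ^ z)
      (∑' x, P x * (1 - α * (1 - s)) ^ x) := by
  set t : ℝ := 1 - α * (1 - s) with ht
  have ht0 : 0 ≤ t := by rw [ht]; nlinarith
  have ht1 : t ≤ 1 := by rw [ht]; nlinarith
  set F : ℕ → ℕ → ℝ :=
    fun x z => P x * (x.choose z : ℝ) * α ^ z * (1 - α) ^ (x - z) * s ^ z with hF
  have h1α : (0:ℝ) ≤ 1 - α := by linarith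
  have hFnn : ∀ x z, 0 ≤ F x z := by
    intro x z
    simp only [hF]
    exact mul_nonneg (mul_nonneg (mul_nonneg (mul_nonneg (hP0 x) (Nat.cast_nonneg _))
      (pow_nonneg hα0 _)) (pow_nonneg h1α _)) (pow_nonneg hs0 _)
  have hrow : ∀ x, HasSum (F x) (P x * t ^ x) := by
    intro x
    have hz : ∀ z ∉ Finset.range (x + 1), F x z = 0 := by
      intro z hz
      simp only [Finset.mem_range, not_lt] at hz
      have hc : x.choose z = 0 := Nat.choose_eq_zero_of_lt (by omega)
      simp [hF, hc]
    have h1 : HasSum (F x) (∑ z ∈ Finset.range (x + 1), F x z) :=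
      hasSum_sum_of_ne_finset_zero hz
    have h2 : ∑ z ∈ Finset.range (x + 1), F x z = P x * t ^ x := by
      have htt : t = α * s + (1 - α) := by rw [ht]; ring
      rw [htt, add_pow, Finset.mul_sum]
      refine Finset.sum_congr rfl fun k _ => ?_
      simp only [hF]
      rw [mul_pow]
      ring
    rwa [h2] at h1
  have hsum2 : Summable (fun x => ∑' z, F x z) := by
    have he : (fun x => ∑' z, F x z) = fun x => P x * t ^ x := by
      funext x; exact (hrow x).tsum_eq
    rw [he]
    exact summable_pmf_pow hP0 hPs ht0 ht1
  have hunc : Summable (Function.uncurry F) :=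
    (summable_prod_of_nonneg fun p => hFnn p.1 p.2).2 ⟨fun x => (hrow x).summable, hsum2⟩
  have hswap : Summable (fun z => ∑' x, F x z) := hunc.prod_symm.prod
  have hkey : (fun z => thin α P z * s ^ z) = fun z => ∑' x, F x z := by
    funext z
    simp only [hF, thin]
    rw [tsum_mul_right]
  rw [hkey]
  have hval : ∑' z, ∑' x, F x z = ∑' x, P x * t ^ x := by
    rw [Summable.tsum_comm hunc]
    exact tsum_congr fun x => (hrow x).tsum_eq
  exact hval ▸ hswap.hasSum

lemma poissonPMF_nonneg {μ : ℝ} (hμ : 0 ≤ μ) (x : ℕ) : 0 ≤ poissonPMF μ x := by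
  unfold poissonPMF
  positivity

/-- PGF of the Poisson distribution. -/
lemma poisson_pgf (μ s : ℝ) :
    HasSum (fun x : ℕ => poissonPMF μ x * s ^ x) (Real.exp (μ * (s - 1))) := by
  have h := NormedSpace.expSeries_div_hasSum_exp (μ * s)
  rw [← Real.exp_eq_exp_ℝ] at h
  have h2 := h.mul_left (Real.exp (-μ))
  have e1 : (fun x : ℕ => poissonPMF μ x * s ^ x)
      = fun x : ℕ => Real.exp (-μ) * ((μ * s) ^ x / x.factorial) := by
    funext x
    unfold poissonPMF
    rw [mul_pow]
    ring
  have e2 : Real.exp (-μ) * Real.exp (μ * s) = Real.exp (μ * (s - 1)) := by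
    rw [← Real.exp_add]
    ring_nf
  rw [e1, ← e2]
  exact h2

lemma poisson_summable (μ : ℝ) : Summable (poissonPMF μ) := by
  have h := (poisson_pgf μ 1).summable
  simpa using h

lemma coeff_zero_of_pgf_zero (g : ℕ → ℝ) (hgs : Summable g)
    (hzero : ∀ s : ℝ, s ∈ Set.Ioo (0:ℝ) 1 →
      Summable (fun x => g x * s ^ x) ∧ ∑' x, g x * s ^ x = 0) :
    ∀ n, g n = 0 := by
  have hga : Summable fun x => |g x| := hgs.abs
  have hC0 : 0 ≤ ∑' x, |g x| := tsum_nonneg fun x => abs_nonneg _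
  intro n
  induction n using Nat.strong_induction_on with
  | _ n ih =>
    have hbound : ∀ s : ℝ, s ∈ Set.Ioo (0:ℝ) 1 → |g n| ≤ s * ∑' x, |g x| := by
      intro s hs
      obtain ⟨hsum, hzs⟩ := hzero s hs
      have h1 : ∑' x, g (x + n) * s ^ (x + n) = 0 := by
        have hsp := Summable.sum_add_tsum_nat_add (f := fun x => g x * s ^ x) n hsum
        have hfin : ∑ i ∈ Finset.range n, g i * s ^ i = 0 :=
          Finset.sum_eq_zero fun i hi => by
            rw [ih i (Finset.mem_range.1 hi), zero_mul]
        rw [hfin, zero_add] at hsp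
        rw [hsp, hzs]
      have hsn : (s : ℝ) ^ n ≠ 0 := pow_ne_zero _ (ne_of_gt hs.1)
      have hr : (fun x => g (x + n) * s ^ (x + n)) = fun x => (g (x + n) * s ^ x) * s ^ n := by
        funext x
        rw [pow_add]; ring
      have h2 : ∑' x, g (x + n) * s ^ x = 0 := by
        rw [hr, tsum_mul_right] at h1
        exact (mul_eq_zero.1 h1).resolve_right hsn
      have hsum' : Summable fun x => g (x + n) * s ^ x := by
        have hs1 := (summable_nat_add_iff n).2 hsum
        rw [hr] at hs1
        have hs2 := hs1.mul_right (s ^ n)⁻¹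
        refine hs2.congr fun x => ?_
        rw [mul_assoc, mul_inv_cancel₀ hsn, mul_one]
      have h3 := Summable.sum_add_tsum_nat_add (f := fun x => g (x + n) * s ^ x) 1 hsum'
      rw [h2] at h3
      simp only [Finset.range_one, Finset.sum_singleton, pow_zero, mul_one, zero_add] at h3
      have h4 : g n = -∑' x, g (x + 1 + n) * s ^ (x + 1) := by linarith
      have hsumt : Summable fun x => g (x + 1 + n) * s ^ (x + 1) :=
        (summable_nat_add_iff 1).2 hsum'
      have hsumtail : Summable fun x : ℕ => |g (x + 1 + n)| := by
        refine ((summable_nat_add_iff (n + 1)).2 hga).congr fun x => ?_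
        rw [show x + (n + 1) = x + 1 + n by omega]
      have htail : |∑' x, g (x + 1 + n) * s ^ (x + 1)| ≤ s * ∑' x, |g x| := by
        calc |∑' x, g (x + 1 + n) * s ^ (x + 1)| ≤ ∑' x, |g (x + 1 + n) * s ^ (x + 1)| := by
              have hn' : Summable fun x => ‖g (x + 1 + n) * s ^ (x + 1)‖ := by
                simpa only [Real.norm_eq_abs] using hsumt.abs
              have hres := norm_tsum_le_tsum_norm hn'
              simpa only [Real.norm_eq_abs] using hres
          _ ≤ ∑' x, s * |g (x + 1 + n)| := by
              refine Summable.tsum_le_tsum (fun x => ?_) hsumt.abs (hsumtail.mul_left s)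
              rw [abs_mul, abs_pow, abs_of_nonneg hs.1.le]
              have h5 : s ^ (x + 1) ≤ s := by
                calc s ^ (x + 1) = s ^ x * s := by ring
                  _ ≤ 1 * s :=
                      mul_le_mul_of_nonneg_right (pow_le_one₀ hs.1.le hs.2.le) hs.1.le
                  _ = s := one_mul _
              calc |g (x + 1 + n)| * s ^ (x + 1) ≤ |g (x + 1 + n)| * s :=
                    mul_le_mul_of_nonneg_left h5 (abs_nonneg _)
                _ = s * |g (x + 1 + n)| := mul_comm _ _
          _ = s * ∑' x, |g (x + 1 + n)| := tsum_mul_left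
          _ ≤ s * ∑' x, |g x| := by
              refine mul_le_mul_of_nonneg_left ?_ hs.1.le
              have hsplit := Summable.sum_add_tsum_nat_add (f := fun x => |g x|) (n + 1) hga
              have hid : ∑' x : ℕ, |g (x + 1 + n)| = ∑' x : ℕ, |g (x + (n + 1))| :=
                tsum_congr fun x => by rw [show x + 1 + n = x + (n + 1) by omega]
              have hfin0 : 0 ≤ ∑ i ∈ Finset.range (n + 1), |g i| :=
                Finset.sum_nonneg fun i _ => abs_nonneg _
              rw [hid, ← hsplit]
              linarith
      rw [h4, abs_neg]
      exact htail
    have hlim : Tendsto (fun k : ℕ => ((1:ℝ)/2) ^ (k + 1) * ∑' x, |g x|) atTop (𝓝 0) := by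
      have h6 := (tendsto_pow_atTop_nhds_zero_of_lt_one (by norm_num : (0:ℝ) ≤ 1/2)
        (by norm_num : (1:ℝ)/2 < 1)).mul_const (∑' x, |g x|)
      rw [zero_mul] at h6
      exact h6.comp (tendsto_add_atTop_nat 1)
    have hle : ∀ k : ℕ, |g n| ≤ ((1:ℝ)/2) ^ (k + 1) * ∑' x, |g x| := by
      intro k
      refine hbound _ ⟨by positivity, ?_⟩
      calc ((1:ℝ)/2) ^ (k + 1) ≤ ((1:ℝ)/2) ^ 1 :=
            pow_le_pow_of_le_one (by norm_num) (by norm_num) (by omega)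
        _ < 1 := by norm_num
    have h7 : |g n| ≤ 0 := le_of_tendsto_of_tendsto' tendsto_const_nhds hlim hle
    exact abs_eq_zero.1 (le_antisymm h7 (abs_nonneg _))

/-- Identity of power-series coefficients from equality of the sums on `(0,1)`. -/
lemma pmf_eq_of_pgf_eq (P Q : ℕ → ℝ) (hP : Summable P) (hQ : Summable Q)
    (h : ∀ s : ℝ, s ∈ Set.Ioo (0:ℝ) 1 → ∑' x, P x * s ^ x = ∑' x, Q x * s ^ x) :
    P = Q := by
  have key := coeff_zero_of_pgf_zero (fun x => P x - Q x) (hP.sub hQ) ?_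
  · funext n
    have hn := key n
    try simp only at hn
    linarith
  · intro s hs
    have hPsummable : Summable fun x => P x * s ^ x := by
      refine hP.abs.of_norm_bounded fun x => ?_
      rw [norm_mul, norm_pow, Real.norm_eq_abs, Real.norm_eq_abs, abs_of_nonneg hs.1.le]
      calc |P x| * s ^ x ≤ |P x| * 1 :=
            mul_le_mul_of_nonneg_left (pow_le_one₀ hs.1.le hs.2.le) (abs_nonneg _)
        _ = |P x| := mul_one _
    have hQsummable : Summable fun x => Q x * s ^ x := by
      refine hQ.abs.of_norm_bounded fun x => ?_
      rw [norm_mul, norm_pow, Real.norm_eq_abs, Real.norm_eq_abs, abs_of_nonneg hs.1.le]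
      calc |Q x| * s ^ x ≤ |Q x| * 1 :=
            mul_le_mul_of_nonneg_left (pow_le_one₀ hs.1.le hs.2.le) (abs_nonneg _)
        _ = |Q x| := mul_one _
    have he : (fun x => (P x - Q x) * s ^ x) = fun x => P x * s ^ x - Q x * s ^ x := by
      funext x; ring
    constructor
    · rw [he]; exact hPsummable.sub hQsummable
    · rw [he, Summable.tsum_sub hPsummable hQsummable, h s hs, sub_self]

/-- Characterization of the Poisson distribution: if `P` has mean λ and is a fixed
point of `U_α^λ` for some `α ∈ (0,1)`, then `P = Po(λ)`. -/
theorem poisson_characterization (P : ℕ → ℝ) (hP : IsPMF P)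
    (lam : ℝ) (hlam : 0 < lam)
    (hmean : HasSum (fun x : ℕ => P x * (x : ℝ)) lam)
    (α : ℝ) (hα : α ∈ Set.Ioo (0 : ℝ) 1)
    (hfix : P = Uop α lam P) :
    P = poissonPMF lam := by
  obtain ⟨hP0, hP1⟩ := hP
  obtain ⟨hα0, hα1⟩ := hα
  have hPs : Summable P := hP1.summable
  set μ : ℝ := (1 - α) * lam with hμdef
  have hμ0 : 0 ≤ μ := mul_nonneg (by linarith) hlam.le
  set f : ℝ → ℝ := fun s => ∑' x, P x * s ^ x with hf
  -- basic fixed-point relation for the PGF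
  have hbase : ∀ s : ℝ, s ∈ Set.Icc (0:ℝ) 1 →
      f s = f (1 - α * (1 - s)) * Real.exp (μ * (s - 1)) := by
    intro s hs
    obtain ⟨hs0, hs1⟩ := hs
    have hq := thin_pgf hP0 hPs hα0.le hα1.le hs0 hs1
    have hr := poisson_pgf μ s
    have hqnn : ∀ z, 0 ≤ thin α P z * s ^ z :=
      fun z => mul_nonneg (thin_nonneg_s14 hP0 hα0.le hα1.le z) (pow_nonneg hs0 z)
    have hrnn : ∀ z, 0 ≤ poissonPMF μ z * s ^ z :=
      fun z => mul_nonneg (poissonPMF_nonneg hμ0 z) (pow_nonneg hs0 z)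
    have hqr : Summable fun x : ℕ × ℕ =>
        (thin α P x.1 * s ^ x.1) * (poissonPMF μ x.2 * s ^ x.2) :=
      Summable.mul_of_nonneg hq.summable hr.summable hqnn hrnn
    have hcauchy := Summable.tsum_mul_tsum_eq_tsum_sum_range hq.summable hr.summable hqr
    have hconv : ∀ n : ℕ, conv (thin α P) (poissonPMF μ) n * s ^ n
        = ∑ k ∈ Finset.range (n + 1),
            (thin α P k * s ^ k) * (poissonPMF μ (n - k) * s ^ (n - k)) := by
      intro n
      rw [conv, Finset.sum_mul]
      refine Finset.sum_congr rfl fun k hk => ?_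
      have hkn : k ≤ n := Nat.lt_succ_iff.1 (Finset.mem_range.1 hk)
      have hpow : s ^ k * s ^ (n - k) = s ^ n := by
        rw [← pow_add, Nat.add_sub_cancel' hkn]
      calc thin α P k * poissonPMF μ (n - k) * s ^ n
          = thin α P k * poissonPMF μ (n - k) * (s ^ k * s ^ (n - k)) := by rw [hpow]
        _ = (thin α P k * s ^ k) * (poissonPMF μ (n - k) * s ^ (n - k)) := by ring
    have hPn : ∀ n : ℕ, P n = conv (thin α P) (poissonPMF μ) n := by
      intro n
      conv_lhs => rw [hfix]
      simp only [Uop, hμdef]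
    calc f s = ∑' n, conv (thin α P) (poissonPMF μ) n * s ^ n := by
          simp only [hf]
          exact tsum_congr fun n => by rw [← hPn n]
      _ = ∑' n, ∑ k ∈ Finset.range (n + 1),
            (thin α P k * s ^ k) * (poissonPMF μ (n - k) * s ^ (n - k)) :=
          tsum_congr fun n => hconv n
      _ = (∑' n, thin α P n * s ^ n) * (∑' n, poissonPMF μ n * s ^ n) := hcauchy.symm
      _ = f (1 - α * (1 - s)) * Real.exp (μ * (s - 1)) := by
          rw [hq.tsum_eq, hr.tsum_eq]
  have hmem : ∀ (n : ℕ) (s : ℝ), s ∈ Set.Icc (0:ℝ) 1 →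
      (1 - α ^ n * (1 - s)) ∈ Set.Icc (0:ℝ) 1 := by
    intro n s hs
    obtain ⟨hs0, hs1⟩ := hs
    have h1 : 0 ≤ α ^ n := pow_nonneg hα0.le n
    have h2 : α ^ n ≤ 1 := pow_le_one₀ hα0.le hα1.le
    constructor
    · nlinarith
    · nlinarith
  have hiter : ∀ (n : ℕ) (s : ℝ), s ∈ Set.Icc (0:ℝ) 1 →
      f s = f (1 - α ^ n * (1 - s)) * Real.exp ((1 - α ^ n) * lam * (s - 1)) := by
    intro n
    induction n with
    | zero =>
      intro s _
      have e : 1 - α ^ 0 * (1 - s) = s := by ring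
      have e2 : (1 - α ^ 0) * lam * (s - 1) = 0 := by ring
      rw [e, e2, Real.exp_zero, mul_one]
    | succ n ih =>
      intro s hs
      have hsn := hmem n s hs
      have hb := hbase _ hsn
      have e1 : 1 - α * (1 - (1 - α ^ n * (1 - s))) = 1 - α ^ (n + 1) * (1 - s) := by ring
      calc f s = f (1 - α ^ n * (1 - s)) * Real.exp ((1 - α ^ n) * lam * (s - 1)) := ih s hs
        _ = (f (1 - α * (1 - (1 - α ^ n * (1 - s))))
              * Real.exp (μ * ((1 - α ^ n * (1 - s)) - 1)))
            * Real.exp ((1 - α ^ n) * lam * (s - 1)) := by rw [← hb]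
        _ = f (1 - α ^ (n + 1) * (1 - s)) * Real.exp ((1 - α ^ (n + 1)) * lam * (s - 1)) := by
            rw [e1, mul_assoc, ← Real.exp_add]
            congr 2
            rw [hμdef]
            ring
  have hpgf_eq : ∀ s : ℝ, s ∈ Set.Icc (0:ℝ) 1 → f s = Real.exp (lam * (s - 1)) := by
    intro s hs
    have htend1 : Tendsto (fun n : ℕ => α ^ n) atTop (𝓝 0) :=
      tendsto_pow_atTop_nhds_zero_of_lt_one hα0.le hα1
    have htendt : Tendsto (fun n : ℕ => 1 - α ^ n * (1 - s)) atTop (𝓝 1) := by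
      have h1 := (htend1.mul_const (1 - s)).const_sub 1
      simpa using h1
    have hA : Tendsto (fun n : ℕ => f (1 - α ^ n * (1 - s))) atTop (𝓝 1) := by
      have hcv := tendsto_tsum_of_dominated_convergence (𝓕 := atTop)
        (f := fun (n : ℕ) (x : ℕ) => P x * (1 - α ^ n * (1 - s)) ^ x)
        (g := fun x : ℕ => P x) (bound := P) hPs
        (fun x => by
          have h2 := (htendt.pow x).const_mul (P x)
          simpa using h2)
        (Eventually.of_forall fun n => fun x => by
          obtain ⟨ht0, ht1⟩ := hmem n s hs
          rw [Real.norm_eq_abs, abs_mul, abs_of_nonneg (hP0 x), abs_pow,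
            abs_of_nonneg ht0]
          calc P x * (1 - α ^ n * (1 - s)) ^ x ≤ P x * 1 :=
                mul_le_mul_of_nonneg_left (pow_le_one₀ ht0 ht1) (hP0 x)
            _ = P x := mul_one _)
      rw [hP1.tsum_eq] at hcv
      simpa only [hf] using hcv
    have hB : Tendsto (fun n : ℕ => Real.exp ((1 - α ^ n) * lam * (s - 1))) atTop
        (𝓝 (Real.exp (lam * (s - 1)))) := by
      have h1 : Tendsto (fun n : ℕ => (1 - α ^ n) * lam * (s - 1)) atTop
          (𝓝 (lam * (s - 1))) := by
        have h2 := ((htend1.const_sub 1).mul_const lam).mul_const (s - 1)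
        simpa using h2
      exact (Real.continuous_exp.tendsto _).comp h1
    have hC : Tendsto (fun n : ℕ =>
        f (1 - α ^ n * (1 - s)) * Real.exp ((1 - α ^ n) * lam * (s - 1))) atTop
        (𝓝 (1 * Real.exp (lam * (s - 1)))) := hA.mul hB
    rw [one_mul] at hC
    have hconstfun : (fun n : ℕ =>
        f (1 - α ^ n * (1 - s)) * Real.exp ((1 - α ^ n) * lam * (s - 1)))
        = fun _ : ℕ => f s := by
      funext n; exact (hiter n s hs).symm
    rw [hconstfun] at hC
    exact tendsto_nhds_unique tendsto_const_nhds hC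
  refine pmf_eq_of_pgf_eq P (poissonPMF lam) hPs (poisson_summable lam) fun s hs => ?_
  have h1 : f s = Real.exp (lam * (s - 1)) := hpgf_eq s ⟨hs.1.le, hs.2.le⟩
  have h2 := (poisson_pgf lam s).tsum_eq
  simp only [hf] at h1
  rw [h1, h2]
end
end

section
/- Let X ~ P be a random variable on ℕ with mean λ > 0, let α ∈ (0,1), and let k ≥ 0 be such that the k-th factorial moment E[X^(k↓)] is finite. If X_{α,λ} is a random variable with distribution U_α^λ(P), then E[P_k^λ(X_{α,λ})] = α^k · E[P_k^λ(X)]. -/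
open scoped BigOperators
open Filter Topology

noncomputable section

/-- The Poisson–Charlier polynomial of order k:
`P_k^λ(x) = (λ^k·k!)^{−1/2} · Σ_{ℓ=0}^k (−λ)^{k−ℓ}·C(k,ℓ)·x^(ℓ↓)`. -/
def charlier (lam : ℝ) (k : ℕ) (x : ℕ) : ℝ :=
  (1 / Real.sqrt (lam ^ k * k.factorial)) *
    ∑ l ∈ Finset.range (k + 1),
      (-lam) ^ (k - l) * (k.choose l : ℝ) * (x.descFactorial l : ℝ)

open Finset

/-! ### Auxiliary lemmas -/

lemma desc_mono {x : ℕ} : ∀ {j k : ℕ}, j ≤ k → k ≤ x → x.descFactorial j ≤ x.descFactorial k := by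
  intro j k
  induction k with
  | zero => intro hj _; obtain rfl := Nat.le_zero.mp hj; exact le_rfl
  | succ k ih =>
    intro hj hx
    rcases Nat.eq_or_lt_of_le hj with rfl | h
    · exact le_rfl
    · calc x.descFactorial j ≤ x.descFactorial k :=
            ih (Nat.lt_succ_iff.mp h) (le_trans (Nat.le_succ k) hx)
        _ ≤ x.descFactorial (k+1) := by
            rw [Nat.descFactorial_succ]
            exact Nat.le_mul_of_pos_left _ (by omega)

lemma desc_bound {j k x : ℕ} (hjk : j ≤ k) :
    x.descFactorial j ≤ x.descFactorial k + k ^ k := by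
  by_cases h : k ≤ x
  · exact le_trans (desc_mono hjk h) (Nat.le_add_right _ _)
  · push_neg at h
    have h1 : 1 ≤ k := by omega
    calc x.descFactorial j ≤ x ^ j := Nat.descFactorial_le_pow _ _
      _ ≤ k ^ j := Nat.pow_le_pow_left (by omega) _
      _ ≤ k ^ k := Nat.pow_le_pow_right h1 hjk
      _ ≤ _ := Nat.le_add_left _ _

lemma binom_desc_sum (α : ℝ) (x l : ℕ) :
    ∑ z ∈ range (x+1), (x.choose z : ℝ) * α ^ z * (1-α) ^ (x - z) * (z.descFactorial l : ℝ)
      = α ^ l * (x.descFactorial l : ℝ) := by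
  by_cases hlx : l ≤ x
  · rw [Finset.range_eq_Ico,
      ← Finset.sum_subset (Finset.Ico_subset_Ico (Nat.zero_le l) le_rfl :
        Finset.Ico l (x+1) ⊆ Finset.Ico 0 (x+1)) ?hz]
    case hz =>
      intro z hz hz'
      simp only [Finset.mem_Ico] at *
      rw [Nat.descFactorial_eq_zero_iff_lt.mpr (by omega)]
      simp
    rw [Finset.sum_Ico_eq_sum_range]
    have hn : x + 1 - l = (x - l) + 1 := by omega
    rw [hn]
    have hterm : ∀ i ∈ range ((x-l)+1),
        (x.choose (l+i) : ℝ) * α ^ (l+i) * (1-α) ^ (x - (l+i)) * ((l+i).descFactorial l : ℝ)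
        = (α ^ l * (x.descFactorial l : ℝ)) *
            (α ^ i * (1-α) ^ ((x-l) - i) * ((x-l).choose i : ℝ)) := by
      intro i hi
      simp only [Finset.mem_range] at hi
      have hle : l + i ≤ x := by omega
      have hkey : x.choose (l+i) * (l+i).descFactorial l = x.descFactorial l * (x-l).choose i := by
        rw [Nat.descFactorial_eq_factorial_mul_choose, Nat.descFactorial_eq_factorial_mul_choose,
          show x.choose (l+i) * (Nat.factorial l * (l+i).choose l)
            = Nat.factorial l * (x.choose (l+i) * (l+i).choose l) by ring,
          Nat.choose_mul (Nat.le_add_right _ _)]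
        simp [Nat.add_sub_cancel_left]
        ring
      have hexp : x - (l + i) = (x - l) - i := by omega
      have hcast : (x.choose (l+i) : ℝ) * ((l+i).descFactorial l : ℝ)
          = (x.descFactorial l : ℝ) * ((x-l).choose i : ℝ) := by
        exact_mod_cast congrArg Nat.cast hkey
      rw [hexp, pow_add]
      linear_combination (α ^ l * α ^ i * (1-α) ^ ((x-l)-i)) * hcast
    rw [Finset.sum_congr rfl hterm, ← Finset.mul_sum]
    have : ∑ i ∈ range ((x-l)+1), α ^ i * (1-α) ^ ((x-l) - i) * ((x-l).choose i : ℝ)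
        = (α + (1-α)) ^ (x-l) := (add_pow α (1-α) (x-l)).symm
    rw [this]
    simp
  · push_neg at hlx
    rw [Nat.descFactorial_eq_zero_iff_lt.mpr hlx]
    rw [Finset.sum_eq_zero, Nat.cast_zero, mul_zero]
    intro z hz
    simp only [Finset.mem_range] at hz
    rw [Nat.descFactorial_eq_zero_iff_lt.mpr (by omega)]
    simp

lemma poisson_moment (μ : ℝ) (l : ℕ) :
    Summable (fun n => poissonPMF μ n * (n.descFactorial l : ℝ)) ∧
    ∑' n, poissonPMF μ n * (n.descFactorial l : ℝ) = μ ^ l := by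
  induction l with
  | zero =>
    have hs : Summable (fun n : ℕ => poissonPMF μ n) := by
      have := (Real.summable_pow_div_factorial μ).mul_left (Real.exp (-μ))
      exact this.congr fun n => by simp [poissonPMF, mul_div_assoc]
    have hexp : ∑' n : ℕ, μ ^ n / n.factorial = Real.exp μ := by
      rw [Real.exp_eq_exp_ℝ, NormedSpace.exp_eq_tsum_div]
    constructor
    · simpa using hs
    · simp only [Nat.descFactorial_zero, Nat.cast_one, mul_one, pow_zero]
      calc ∑' n, poissonPMF μ n = Real.exp (-μ) * ∑' n : ℕ, μ ^ n / n.factorial := by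
            rw [← tsum_mul_left]; exact tsum_congr fun n => by simp [poissonPMF, mul_div_assoc]
        _ = 1 := by rw [hexp, ← Real.exp_add]; simp
  | succ l ih =>
    have hrec : ∀ n : ℕ, poissonPMF μ (n+1) * (((n+1).descFactorial (l+1) : ℕ) : ℝ)
        = μ * (poissonPMF μ n * (n.descFactorial l : ℝ)) := by
      intro n
      have hf : ((n.factorial : ℕ) : ℝ) ≠ 0 := Nat.cast_ne_zero.mpr n.factorial_ne_zero
      simp only [poissonPMF, Nat.succ_descFactorial_succ, Nat.factorial_succ]
      push_cast
      field_simp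
      ring
    have hs : Summable (fun n => poissonPMF μ n * ((n.descFactorial (l+1) : ℕ) : ℝ)) := by
      rw [← summable_nat_add_iff 1]
      exact ((ih.1.mul_left μ).congr fun n => (hrec n).symm)
    refine ⟨hs, ?_⟩
    rw [hs.tsum_eq_zero_add]
    have h0 : poissonPMF μ 0 * (((0:ℕ).descFactorial (l+1) : ℕ) : ℝ) = 0 := by
      simp [Nat.zero_descFactorial_succ]
    rw [h0, zero_add, tsum_congr hrec, tsum_mul_left, ih.2, pow_succ]
    ring

lemma desc_vander (a b k : ℕ) :
    (a + b).descFactorial k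
      = ∑ j ∈ range (k+1), k.choose j * (a.descFactorial j * b.descFactorial (k - j)) := by
  rw [Nat.descFactorial_eq_factorial_mul_choose, Nat.add_choose_eq,
    Finset.Nat.sum_antidiagonal_eq_sum_range_succ_mk, Finset.mul_sum]
  refine Finset.sum_congr rfl fun j hj => ?_
  have hj' : j ≤ k := by simpa [Nat.lt_succ_iff] using hj
  rw [Nat.descFactorial_eq_factorial_mul_choose, Nat.descFactorial_eq_factorial_mul_choose,
    ← Nat.choose_mul_factorial_mul_factorial hj']
  ring

lemma key_sum (lam μ : ℝ) {j k : ℕ} (hjk : j ≤ k) :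
    ∑ l ∈ range (k+1), (-lam)^(k-l) * (k.choose l : ℝ) * (l.choose j : ℝ) * μ^(l-j)
      = (k.choose j : ℝ) * (μ - lam)^(k-j) := by
  rw [Finset.range_eq_Ico,
    ← Finset.sum_subset (Finset.Ico_subset_Ico (Nat.zero_le j) le_rfl :
      Finset.Ico j (k+1) ⊆ Finset.Ico 0 (k+1)) ?hz]
  case hz =>
    intro l hl hl'
    simp only [Finset.mem_Ico] at *
    rw [Nat.choose_eq_zero_of_lt (by omega : l < j)]
    simp
  rw [Finset.sum_Ico_eq_sum_range]
  have hn : k + 1 - j = (k - j) + 1 := by omega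
  rw [hn]
  have hterm : ∀ i ∈ range ((k-j)+1),
      (-lam)^(k-(j+i)) * (k.choose (j+i) : ℝ) * ((j+i).choose j : ℝ) * μ^((j+i)-j)
      = (k.choose j : ℝ) * (μ^i * (-lam)^((k-j)-i) * ((k-j).choose i : ℝ)) := by
    intro i hi
    simp only [Finset.mem_range] at hi
    have hle : j + i ≤ k := by omega
    have hc : k.choose (j+i) * (j+i).choose j = k.choose j * (k-j).choose i := by
      rw [Nat.choose_mul (Nat.le_add_right _ _)]
      simp [Nat.add_sub_cancel_left]
    have hc' : (k.choose (j+i) : ℝ) * ((j+i).choose j : ℝ)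
        = (k.choose j : ℝ) * ((k-j).choose i : ℝ) := by exact_mod_cast congrArg Nat.cast hc
    have he1 : k - (j+i) = (k-j) - i := by omega
    have he2 : (j+i) - j = i := by omega
    rw [he1, he2]
    linear_combination ((-lam)^((k-j)-i) * μ^i) * hc'
  rw [Finset.sum_congr rfl hterm, ← Finset.mul_sum]
  have : ∑ i ∈ range ((k-j)+1), μ^i * (-lam)^((k-j)-i) * ((k-j).choose i : ℝ)
      = (μ + (-lam))^(k-j) := (add_pow μ (-lam) (k-j)).symm
  rw [this]
  ring_nf

lemma conv_moment {Q R : ℕ → ℝ} {k : ℕ}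
    (hQ0 : ∀ n, 0 ≤ Q n) (hR0 : ∀ n, 0 ≤ R n)
    (hQ : ∀ j, j ≤ k → Summable fun a => Q a * (a.descFactorial j : ℝ))
    (hR : ∀ j, j ≤ k → Summable fun b => R b * (b.descFactorial j : ℝ)) :
    Summable (fun n => conv Q R n * (n.descFactorial k : ℝ)) ∧
    ∑' n, conv Q R n * (n.descFactorial k : ℝ)
      = ∑ j ∈ range (k+1), (k.choose j : ℝ) *
          ((∑' a, Q a * (a.descFactorial j : ℝ)) * (∑' b, R b * (b.descFactorial (k-j) : ℝ))) := by
  have hQn : ∀ j, j ≤ k → Summable fun a => ‖Q a * (a.descFactorial j : ℝ)‖ := by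
    intro j hj
    refine (hQ j hj).congr fun a => ?_
    rw [Real.norm_eq_abs, abs_of_nonneg (mul_nonneg (hQ0 a) (Nat.cast_nonneg _))]
  have hRn : ∀ j, j ≤ k → Summable fun b => ‖R b * (b.descFactorial j : ℝ)‖ := by
    intro j hj
    refine (hR j hj).congr fun b => ?_
    rw [Real.norm_eq_abs, abs_of_nonneg (mul_nonneg (hR0 b) (Nat.cast_nonneg _))]
  have hpt : ∀ n, conv Q R n * (n.descFactorial k : ℝ)
      = ∑ j ∈ range (k+1), (k.choose j : ℝ) *
          (∑ i ∈ range (n+1),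
            (Q i * (i.descFactorial j : ℝ)) * (R (n-i) * ((n-i).descFactorial (k-j) : ℝ))) := by
    intro n
    have h1 : ∀ i ∈ range (n+1), (Q i * R (n-i)) * (n.descFactorial k : ℝ)
        = ∑ j ∈ range (k+1), (k.choose j : ℝ) *
            ((Q i * (i.descFactorial j : ℝ)) * (R (n-i) * ((n-i).descFactorial (k-j) : ℝ))) := by
      intro i hi
      simp only [Finset.mem_range] at hi
      have hi' : i ≤ n := by omega
      have hd : n.descFactorial k
          = ∑ j ∈ range (k+1), k.choose j * (i.descFactorial j * (n-i).descFactorial (k-j)) := by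
        conv_lhs => rw [show n = i + (n - i) from (Nat.add_sub_cancel' hi').symm]
        exact desc_vander i (n-i) k
      rw [hd]
      push_cast
      rw [Finset.mul_sum]
      exact Finset.sum_congr rfl fun j _ => by ring
    rw [conv, Finset.sum_mul, Finset.sum_congr rfl h1, Finset.sum_comm]
    exact Finset.sum_congr rfl fun j _ => (Finset.mul_sum _ _ _).symm
  have hsj : ∀ j ∈ range (k+1), Summable (fun n => (k.choose j : ℝ) *
      ∑ i ∈ range (n+1),
        (Q i * (i.descFactorial j : ℝ)) * (R (n-i) * ((n-i).descFactorial (k-j) : ℝ))) := by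
    intro j hj
    simp only [Finset.mem_range] at hj
    have h := summable_norm_sum_mul_range_of_summable_norm
      (f := fun a => Q a * (a.descFactorial j : ℝ))
      (g := fun b => R b * (b.descFactorial (k-j) : ℝ))
      (hQn j (by omega)) (hRn (k-j) (by omega))
    exact h.of_norm.mul_left _
  constructor
  · exact (summable_sum hsj).congr fun n => (hpt n).symm
  · rw [tsum_congr hpt, Summable.tsum_finsetSum hsj]
    refine Finset.sum_congr rfl fun j hj => ?_
    simp only [Finset.mem_range] at hj
    have h := tsum_mul_tsum_eq_tsum_sum_range_of_summable_norm
      (f := fun a => Q a * (a.descFactorial j : ℝ))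
      (g := fun b => R b * (b.descFactorial (k-j) : ℝ))
      (hQn j (by omega)) (hRn (k-j) (by omega))
    rw [tsum_mul_left, ← h]

lemma thin_moment {P : ℕ → ℝ} (hP0 : ∀ x, 0 ≤ P x) {α : ℝ} (hα0 : 0 ≤ α) (hα1 : α ≤ 1)
    (j : ℕ) (hPd : Summable fun x => P x * (x.descFactorial j : ℝ)) :
    Summable (fun z => thin α P z * (z.descFactorial j : ℝ)) ∧
    ∑' z, thin α P z * (z.descFactorial j : ℝ) = α ^ j * ∑' x, P x * (x.descFactorial j : ℝ) := by
  set g : ℕ → ℕ → ℝ := fun x z =>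
    P x * (x.choose z : ℝ) * α ^ z * (1 - α) ^ (x - z) * (z.descFactorial j : ℝ) with hg
  have h0 : ∀ x z, 0 ≤ g x z := by
    intro x z
    have h1 : (0:ℝ) ≤ 1 - α := by linarith
    exact mul_nonneg (mul_nonneg (mul_nonneg (mul_nonneg (hP0 x) (Nat.cast_nonneg _))
      (pow_nonneg hα0 _)) (pow_nonneg h1 _)) (Nat.cast_nonneg _)
  have hx_slice : ∀ x, HasSum (fun z => g x z) (P x * (α ^ j * (x.descFactorial j : ℝ))) := by
    intro x
    have hfin : ∀ z ∉ range (x+1), g x z = 0 := by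
      intro z hz
      simp only [Finset.mem_range] at hz
      have : x.choose z = 0 := Nat.choose_eq_zero_of_lt (by omega)
      simp [hg, this]
    have := hasSum_sum_of_ne_finset_zero (L := SummationFilter.unconditional ℕ) hfin
    convert this using 1
    rw [← binom_desc_sum α x j, Finset.mul_sum]
    exact Finset.sum_congr rfl fun z _ => by simp only [hg]; ring
  have hslice_summable : ∀ x, Summable (fun z => g x z) := fun x => (hx_slice x).summable
  have hsum2 : Summable (fun x => ∑' z, g x z) := by
    refine ((hPd.mul_left (α ^ j)).congr fun x => ?_)
    rw [(hx_slice x).tsum_eq]; ring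
  have hprod : Summable (fun p : ℕ × ℕ => g p.1 p.2) := by
    refine (summable_prod_of_nonneg (fun p => h0 p.1 p.2)).mpr ⟨fun x => hslice_summable x, ?_⟩
    exact hsum2
  have hswap : Summable (fun p : ℕ × ℕ => g p.2 p.1) := by
    have := hprod.prod_symm
    exact this
  have hcol := (summable_prod_of_nonneg (f := fun p : ℕ × ℕ => g p.2 p.1)
    (fun p => h0 p.2 p.1)).mp hswap
  have hthin_eq : ∀ z, thin α P z * (z.descFactorial j : ℝ) = ∑' x, g x z := by
    intro z
    rw [thin, ← tsum_mul_right]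
  constructor
  · exact hcol.2.congr fun z => (hthin_eq z).symm
  · rw [tsum_congr hthin_eq]
    have hunc : Summable (Function.uncurry g) := hprod
    rw [hunc.tsum_comm' hslice_summable hcol.1]
    calc ∑' x, ∑' z, g x z = ∑' x, α ^ j * (P x * (x.descFactorial j : ℝ)) := by
          refine tsum_congr fun x => ?_
          rw [(hx_slice x).tsum_eq]; ring
      _ = α ^ j * ∑' x, P x * (x.descFactorial j : ℝ) := tsum_mul_left

/-- Poisson–Charlier moments under the operator `U_α^λ`:
`E[P_k^λ(X_{α,λ})] = α^k · E[P_k^λ(X)]`. -/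
theorem charlier_moment_Uop (P : ℕ → ℝ) (hP : IsPMF P)
    (lam : ℝ) (hlam : 0 < lam)
    (hmean : HasSum (fun x : ℕ => P x * (x : ℝ)) lam)
    (α : ℝ) (hα : α ∈ Set.Ioo (0 : ℝ) 1) (k : ℕ)
    (hfm : Summable (fun x : ℕ => P x * (x.descFactorial k : ℝ))) :
    ∑' x : ℕ, Uop α lam P x * charlier lam k x =
      α ^ k * ∑' x : ℕ, P x * charlier lam k x := by
  obtain ⟨hα0, hα1⟩ := hα
  have hP0 := hP.1
  have hPsum : Summable P := hP.2.summable
  -- all factorial moments up to k are finite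
  have hPd : ∀ j, j ≤ k → Summable fun x => P x * (x.descFactorial j : ℝ) := by
    intro j hj
    have hb : Summable (fun x => P x * (x.descFactorial k : ℝ) + P x * ((k ^ k : ℕ) : ℝ)) :=
      hfm.add (hPsum.mul_right _)
    refine Summable.of_nonneg_of_le (fun x => mul_nonneg (hP0 x) (Nat.cast_nonneg _))
      (fun x => ?_) hb
    have hd : ((x.descFactorial j : ℕ) : ℝ) ≤ ((x.descFactorial k + k ^ k : ℕ) : ℝ) := by
      exact_mod_cast desc_bound hj
    calc P x * (x.descFactorial j : ℝ)
        ≤ P x * ((x.descFactorial k + k ^ k : ℕ) : ℝ) :=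
          mul_le_mul_of_nonneg_left hd (hP0 x)
      _ = P x * (x.descFactorial k : ℝ) + P x * ((k ^ k : ℕ) : ℝ) := by push_cast; ring
  simp only [Uop]
  set μ := (1 - α) * lam with hμdef
  have hthin := fun j (hj : j ≤ k) =>
    thin_moment hP0 (le_of_lt hα0) (le_of_lt hα1) j (hPd j hj)
  have hthin0 : ∀ z, 0 ≤ thin α P z := by
    intro z
    refine tsum_nonneg fun x => ?_
    have h1 : (0:ℝ) ≤ 1 - α := by linarith
    exact mul_nonneg (mul_nonneg (mul_nonneg (hP0 x) (Nat.cast_nonneg _))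
      (pow_nonneg (le_of_lt hα0) _)) (pow_nonneg h1 _)
  have hpo0 : ∀ n, 0 ≤ poissonPMF μ n := by
    intro n
    have hμ0 : 0 ≤ μ := by
      rw [hμdef]; exact mul_nonneg (by linarith) (le_of_lt hlam)
    exact div_nonneg (mul_nonneg (le_of_lt (Real.exp_pos _)) (pow_nonneg hμ0 _))
      (Nat.cast_nonneg _)
  have hpo := poisson_moment μ
  have hconv := fun l (hl : l ≤ k) =>
    conv_moment (Q := thin α P) (R := poissonPMF μ) (k := l) hthin0 hpo0
      (fun j hj => (hthin j (le_trans hj hl)).1) (fun j _ => (hpo j).1)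
  set c : ℝ := 1 / Real.sqrt (lam ^ k * k.factorial) with hc
  set m : ℕ → ℝ := fun j => ∑' x, P x * (x.descFactorial j : ℝ) with hm
  -- pointwise expansion of W n * charlier
  have hpt : ∀ (W : ℕ → ℝ) (n : ℕ), W n * charlier lam k n
      = ∑ l ∈ range (k+1),
          (c * ((-lam) ^ (k-l) * (k.choose l : ℝ))) * (W n * (n.descFactorial l : ℝ)) := by
    intro W n
    simp only [charlier, ← hc, Finset.mul_sum]
    exact Finset.sum_congr rfl fun l _ => by ring
  -- left side
  have hL : ∑' n, conv (thin α P) (poissonPMF μ) n * charlier lam k n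
      = ∑ l ∈ range (k+1), (c * ((-lam) ^ (k-l) * (k.choose l : ℝ))) *
          (∑' n, conv (thin α P) (poissonPMF μ) n * (n.descFactorial l : ℝ)) := by
    rw [tsum_congr (hpt (conv (thin α P) (poissonPMF μ)))]
    rw [Summable.tsum_finsetSum (fun l hl => ((hconv l (by simpa [Nat.lt_succ_iff] using hl)).1).mul_left _)]
    exact Finset.sum_congr rfl fun l _ => tsum_mul_left
  -- right side
  have hRs : ∑' x, P x * charlier lam k x
      = ∑ l ∈ range (k+1), (c * ((-lam) ^ (k-l) * (k.choose l : ℝ))) * m l := by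
    rw [tsum_congr (hpt P)]
    rw [Summable.tsum_finsetSum (fun l hl => ((hPd l (by simpa [Nat.lt_succ_iff] using hl)).mul_left _))]
    exact Finset.sum_congr rfl fun l _ => tsum_mul_left
  rw [hL, hRs]
  -- compute the convolution moments
  have hM : ∀ l ∈ range (k+1),
      (c * ((-lam) ^ (k-l) * (k.choose l : ℝ))) *
        (∑' n, conv (thin α P) (poissonPMF μ) n * (n.descFactorial l : ℝ))
      = ∑ j ∈ range (k+1),
          (c * (α ^ j * m j)) *
            ((-lam) ^ (k-l) * (k.choose l : ℝ) * (l.choose j : ℝ) * μ ^ (l-j)) := by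
    intro l hl
    have hlk : l ≤ k := by simpa [Nat.lt_succ_iff] using hl
    rw [(hconv l hlk).2]
    have hin : ∀ j ∈ range (l+1), (l.choose j : ℝ) *
        ((∑' a, thin α P a * (a.descFactorial j : ℝ)) *
          (∑' b, poissonPMF μ b * (b.descFactorial (l-j) : ℝ)))
        = (l.choose j : ℝ) * ((α ^ j * m j) * μ ^ (l-j)) := by
      intro j hj
      have hjl : j ≤ l := by simpa [Nat.lt_succ_iff] using hj
      rw [(hthin j (le_trans hjl hlk)).2, (hpo (l-j)).2, hm]
    rw [Finset.sum_congr rfl hin, Finset.mul_sum]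
    -- extend the inner sum from range (l+1) to range (k+1)
    rw [Finset.sum_subset (Finset.range_subset_range.mpr (by omega : l + 1 ≤ k + 1)) ?hz]
    case hz =>
      intro j hj hj'
      simp only [Finset.mem_range] at hj hj'
      rw [Nat.choose_eq_zero_of_lt (by omega : l < j)]
      simp
    exact Finset.sum_congr rfl fun j _ => by ring
  rw [Finset.sum_congr rfl hM, Finset.sum_comm]
  -- now sum over l for each fixed j using key_sum
  have hfinal : ∀ j ∈ range (k+1),
      (∑ l ∈ range (k+1), (c * (α ^ j * m j)) *
          ((-lam) ^ (k-l) * (k.choose l : ℝ) * (l.choose j : ℝ) * μ ^ (l-j)))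
      = α ^ k * ((c * ((-lam) ^ (k-j) * (k.choose j : ℝ))) * m j) := by
    intro j hj
    have hjk : j ≤ k := by simpa [Nat.lt_succ_iff] using hj
    rw [← Finset.mul_sum, key_sum lam μ hjk]
    have hμl : μ - lam = α * (-lam) := by rw [hμdef]; ring
    rw [hμl, mul_pow]
    have hαk : α ^ j * α ^ (k-j) = α ^ k := by
      rw [← pow_add, Nat.add_sub_cancel' hjk]
    linear_combination (c * m j * (k.choose j : ℝ) * (-lam) ^ (k-j)) * hαk
  rw [Finset.sum_congr rfl hfinal, ← Finset.mul_sum]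
end
end

section
/- Let X ~ P be a random variable on ℕ that is Poisson bounded with ratio λ. Then for every x ≥ 0 the series Σ_{ℓ=0}^∞ (−1)^ℓ · E[X^((x+ℓ)↓)] / ℓ! converges absolutely, and P(x) = (1/x!) · Σ_{ℓ=0}^∞ (−1)^ℓ · E[X^((x+ℓ)↓)] / ℓ!. Moreover, for every m ≥ 0, the truncated sum (1/x!) · Σ_{ℓ=0}^m (−1)^ℓ · E[X^((x+ℓ)↓)] / ℓ! is an upper bound for P(x) when m is even, and a lower bound when m is odd. -/
open scoped BigOperators ENNReal
open Filter Topology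

noncomputable section

/-- The k-th factorial moment, as a real number. -/
def fm (P : ℕ → ℝ) (k : ℕ) : ℝ := (fmE P k).toReal

lemma descFactorial_add'' (n a b : ℕ) :
    n.descFactorial (a + b) = n.descFactorial a * (n - a).descFactorial b := by
  induction b with
  | zero => simp
  | succ b ih =>
    rw [← Nat.add_assoc, Nat.descFactorial_succ, ih, Nat.descFactorial_succ, Nat.sub_sub]
    ring

lemma alt_choose_partial (n m : ℕ) :
    ∑ l ∈ Finset.range (m + 1), (-1 : ℝ) ^ l * ((n + 1).choose l : ℝ)
      = (-1) ^ m * (n.choose m : ℝ) := by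
  induction m with
  | zero => simp
  | succ m ih =>
    rw [Finset.sum_range_succ, ih, Nat.choose_succ_succ]
    push_cast
    ring

/-- Alternating-series representation of a Poisson bounded pmf:
`P(x) = (1/x!)·Σ_{ℓ} (−1)^ℓ·E[X^((x+ℓ)↓)]/ℓ!`, with absolute convergence, and the
truncations are upper bounds for even m and lower bounds for odd m. -/
theorem pb_alternating_representation (P : ℕ → ℝ) (hP : IsPMF P)
    (lam : ℝ) (hlam : 0 < lam) (hPB : IsPB P lam) (x : ℕ) :
    Summable (fun l : ℕ => |(-1 : ℝ) ^ l * fm P (x + l) / l.factorial|) ∧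
    P x = (1 / (x.factorial : ℝ)) *
        ∑' l : ℕ, (-1 : ℝ) ^ l * fm P (x + l) / l.factorial ∧
    (∀ m : ℕ, Even m →
      P x ≤ (1 / (x.factorial : ℝ)) *
        ∑ l ∈ Finset.range (m + 1), (-1 : ℝ) ^ l * fm P (x + l) / l.factorial) ∧
    (∀ m : ℕ, Odd m →
      (1 / (x.factorial : ℝ)) *
        ∑ l ∈ Finset.range (m + 1), (-1 : ℝ) ^ l * fm P (x + l) / l.factorial ≤ P x) := by
  obtain ⟨hP0, hP1⟩ := hP
  have hfin : ∀ k, fmE P k ≠ ⊤ := fun k =>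
    ne_top_of_le_ne_top (ENNReal.pow_ne_top ENNReal.ofReal_ne_top) (hPB k)
  have hterm_ne : ∀ k y, ENNReal.ofReal (P y) * ((y.descFactorial k : ℕ) : ℝ≥0∞) ≠ ⊤ :=
    fun k y => ENNReal.mul_ne_top ENNReal.ofReal_ne_top (ENNReal.natCast_ne_top _)
  have hsumm : ∀ k, Summable (fun y : ℕ => P y * (y.descFactorial k : ℝ)) := by
    intro k
    have h2 := ENNReal.summable_toReal (hfin k)
    simp only [ENNReal.toReal_mul, ENNReal.toReal_natCast] at h2
    exact h2.congr fun y => by rw [ENNReal.toReal_ofReal (hP0 y)]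
  have hfm_eq : ∀ k, fm P k = ∑' y, P y * (y.descFactorial k : ℝ) := by
    intro k
    rw [fm, fmE, ENNReal.tsum_toReal_eq (fun y => hterm_ne k y)]
    exact tsum_congr fun y => by
      rw [ENNReal.toReal_mul, ENNReal.toReal_ofReal (hP0 y), ENNReal.toReal_natCast]
  have hfm_nonneg : ∀ k, 0 ≤ fm P k := fun k => ENNReal.toReal_nonneg
  have hfm_le : ∀ k, fm P k ≤ lam ^ k := by
    intro k
    have h1 : (ENNReal.ofReal lam ^ k).toReal = lam ^ k := by
      rw [ENNReal.toReal_pow, ENNReal.toReal_ofReal hlam.le]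
    calc fm P k ≤ (ENNReal.ofReal lam ^ k).toReal :=
          ENNReal.toReal_mono (ENNReal.pow_ne_top ENNReal.ofReal_ne_top) (hPB k)
      _ = lam ^ k := h1
  -- absolute summability
  have habs : Summable (fun l : ℕ => |(-1 : ℝ) ^ l * fm P (x + l) / l.factorial|) := by
    have hS : Summable (fun l : ℕ => lam ^ x * (lam ^ l / l.factorial)) :=
      (Real.summable_pow_div_factorial lam).mul_left _
    refine hS.of_nonneg_of_le (fun l => abs_nonneg _) (fun l => ?_)
    have hfact : (0 : ℝ) < l.factorial := by positivity
    rw [abs_div, abs_mul, abs_pow, abs_neg, abs_one, one_pow, one_mul,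
      abs_of_nonneg (hfm_nonneg _), Nat.abs_cast]
    rw [← mul_div_assoc, ← pow_add]
    gcongr
    exact hfm_le (x + l)
  have hsum : Summable (fun l : ℕ => (-1 : ℝ) ^ l * fm P (x + l) / l.factorial) :=
    habs.of_abs
  -- key finite-truncation Fubini identity
  have hkey : ∀ m : ℕ,
      ∑ l ∈ Finset.range (m + 1), (-1 : ℝ) ^ l * fm P (x + l) / l.factorial
        = ∑' y : ℕ, ∑ l ∈ Finset.range (m + 1),
            (-1 : ℝ) ^ l * (P y * (y.descFactorial (x + l) : ℝ)) / l.factorial := by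
    intro m
    rw [Summable.tsum_finsetSum (fun l _ => ((hsumm (x + l)).mul_left ((-1 : ℝ) ^ l)).div_const _)]
    refine Finset.sum_congr rfl fun l _ => ?_
    rw [tsum_div_const, tsum_mul_left, ← hfm_eq]
  -- evaluate the inner (descFactorial-only) alternating sum
  have hclt : ∀ (m y : ℕ), y < x →
      ∑ l ∈ Finset.range (m + 1), (-1 : ℝ) ^ l * (y.descFactorial (x + l) : ℝ) / l.factorial = 0 := by
    intro m y hyx
    refine Finset.sum_eq_zero fun l _ => ?_
    rw [Nat.descFactorial_of_lt (by omega)]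
    simp
  have hceq : ∀ m : ℕ,
      ∑ l ∈ Finset.range (m + 1), (-1 : ℝ) ^ l * (x.descFactorial (x + l) : ℝ) / l.factorial
        = (x.factorial : ℝ) := by
    intro m
    rw [Finset.sum_eq_single_of_mem 0 (Finset.mem_range.2 (by omega))]
    · simp [Nat.descFactorial_self]
    · intro l _ hl
      rw [Nat.descFactorial_of_lt (by omega)]
      simp
  have hcgt : ∀ (m y : ℕ), x < y →
      ∑ l ∈ Finset.range (m + 1), (-1 : ℝ) ^ l * (y.descFactorial (x + l) : ℝ) / l.factorial
        = (y.descFactorial x : ℝ) * ((-1) ^ m * ((y - x - 1).choose m : ℝ)) := by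
    intro m y hxy
    have hy : y - x - 1 + 1 = y - x := by omega
    have step : ∀ l ∈ Finset.range (m + 1),
        (-1 : ℝ) ^ l * (y.descFactorial (x + l) : ℝ) / l.factorial
          = (y.descFactorial x : ℝ) * ((-1) ^ l * ((y - x - 1 + 1).choose l : ℝ)) := by
      intro l _
      have hfact : (l.factorial : ℝ) ≠ 0 := by positivity
      rw [descFactorial_add'']
      simp only [Nat.descFactorial_eq_factorial_mul_choose, hy]
      push_cast
      field_simp
    rw [Finset.sum_congr rfl step, ← Finset.mul_sum, alt_choose_partial]
  -- termwise comparison functions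
  set f0 : ℕ → ℝ := fun y => if y = x then P x * x.factorial else 0 with hf0
  have hf0summ : Summable f0 := (hasSum_ite_eq x (P x * (x.factorial : ℝ))).summable
  have hf0sum : ∑' y, f0 y = P x * x.factorial := tsum_ite_eq x _
  have hgsumm : ∀ m : ℕ, Summable (fun y : ℕ => ∑ l ∈ Finset.range (m + 1),
      (-1 : ℝ) ^ l * (P y * (y.descFactorial (x + l) : ℝ)) / l.factorial) :=
    fun m => summable_sum fun l _ => ((hsumm (x + l)).mul_left ((-1 : ℝ) ^ l)).div_const _
  have hg_eq : ∀ (m y : ℕ),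
      ∑ l ∈ Finset.range (m + 1), (-1 : ℝ) ^ l * (P y * (y.descFactorial (x + l) : ℝ)) / l.factorial
        = P y * ∑ l ∈ Finset.range (m + 1), (-1 : ℝ) ^ l * (y.descFactorial (x + l) : ℝ) / l.factorial := by
    intro m y
    rw [Finset.mul_sum]
    exact Finset.sum_congr rfl fun l _ => by ring
  -- bounds on truncated sums
  have heven : ∀ m : ℕ, Even m → P x * x.factorial ≤
      ∑ l ∈ Finset.range (m + 1), (-1 : ℝ) ^ l * fm P (x + l) / l.factorial := by
    intro m hm
    rw [hkey m, ← hf0sum]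
    refine Summable.tsum_le_tsum (fun y => ?_) hf0summ (hgsumm m)
    rw [hg_eq]
    rcases lt_trichotomy y x with h | h | h
    · simp only [f0, hclt m y h, mul_zero, if_neg h.ne, le_refl]
    · subst h
      simp only [f0, hceq m, if_pos rfl, le_refl]
    · simp only [f0, hcgt m y h, if_neg h.ne']
      rw [hm.neg_one_pow, one_mul]
      have := hP0 y
      positivity
  have hodd : ∀ m : ℕ, Odd m →
      (∑ l ∈ Finset.range (m + 1), (-1 : ℝ) ^ l * fm P (x + l) / l.factorial)
        ≤ P x * x.factorial := by
    intro m hm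
    rw [hkey m, ← hf0sum]
    refine Summable.tsum_le_tsum (fun y => ?_) (hgsumm m) hf0summ
    rw [hg_eq]
    rcases lt_trichotomy y x with h | h | h
    · simp only [f0, hclt m y h, mul_zero, if_neg h.ne, le_refl]
    · subst h
      simp only [f0, hceq m, if_pos rfl, le_refl]
    · simp only [f0, hcgt m y h, if_neg h.ne']
      rw [hm.neg_one_pow]
      have h1 : (0:ℝ) ≤ P y * ((y.descFactorial x : ℝ) * ((y - x - 1).choose m : ℝ)) := by
        have := hP0 y
        positivity
      nlinarith [h1]
  -- limit squeeze
  have hx : (0 : ℝ) < x.factorial := by positivity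
  have htend : Tendsto (fun n : ℕ => ∑ l ∈ Finset.range n,
      (-1 : ℝ) ^ l * fm P (x + l) / l.factorial) atTop
      (𝓝 (∑' l : ℕ, (-1 : ℝ) ^ l * fm P (x + l) / l.factorial)) :=
    hsum.hasSum.tendsto_sum_nat
  have h2k1 : Tendsto (fun k : ℕ => 2 * k + 1) atTop atTop :=
    tendsto_atTop_atTop.2 fun b => ⟨b, fun a ha => by omega⟩
  have h2k2 : Tendsto (fun k : ℕ => 2 * k + 2) atTop atTop :=
    tendsto_atTop_atTop.2 fun b => ⟨b, fun a ha => by omega⟩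
  have hTle : P x * x.factorial ≤ ∑' l : ℕ, (-1 : ℝ) ^ l * fm P (x + l) / l.factorial :=
    ge_of_tendsto' (htend.comp h2k1) fun k => heven (2 * k) (even_two_mul k)
  have hTge : (∑' l : ℕ, (-1 : ℝ) ^ l * fm P (x + l) / l.factorial) ≤ P x * x.factorial :=
    le_of_tendsto' (htend.comp h2k2) fun k => by
      have := hodd (2 * k + 1) ⟨k, by ring⟩
      simpa using this
  have hTeq : (∑' l : ℕ, (-1 : ℝ) ^ l * fm P (x + l) / l.factorial) = P x * x.factorial :=
    le_antisymm hTge hTle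
  refine ⟨habs, ?_, fun m hm => ?_, fun m hm => ?_⟩
  · rw [hTeq]
    field_simp
  · calc P x = (1 / (x.factorial : ℝ)) * (P x * x.factorial) := by field_simp
      _ ≤ _ := mul_le_mul_of_nonneg_left (heven m hm) (by positivity)
  · calc (1 / (x.factorial : ℝ)) * ∑ l ∈ Finset.range (m + 1),
          (-1 : ℝ) ^ l * fm P (x + l) / l.factorial
        ≤ (1 / (x.factorial : ℝ)) * (P x * x.factorial) :=
          mul_le_mul_of_nonneg_left (hodd m hm) (by positivity)
      _ = P x := by field_simp
end
end
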